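/- arXiv:1612.08982 — 10 statements merged into one kernel-verified Lean document; each statement's English description precedes it below -/
import Mathlib

section
/- For every s ∈ (0,1), the element u^{(1)}(s) with coordinates (u^{(1)}(s))_k = −(log λ_k) λ_k^{-s} f_k belongs to H, and the map S : (0,1) → H has (Fréchet) derivative u^{(1)}(s) at s; that is, ‖S(s+h) − S(s) − h·u^{(1)}(s)‖ / |h| → 0 as h → 0. -/
open Real ENNReal

-- comparison for Memℓp at p = 2
lemma mem_of_le {f : ℕ → ℝ} (hf : Memℓp f 2) {g : ℕ → ℝ} {C : ℝ}
    (h : ∀ k, |g k| ≤ C * |f k|) : Memℓp g 2 := by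
  apply memℓp_gen
  have h2 : (2 : ℝ≥0∞).toReal = 2 := by norm_num
  have hs : Summable fun k => ‖f k‖ ^ (2 : ℝ≥0∞).toReal := hf.summable (by norm_num)
  rw [h2] at hs ⊢
  simp only [Real.norm_eq_abs, Real.rpow_two] at hs ⊢
  refine Summable.of_nonneg_of_le (fun k => by positivity) (fun k => ?_) (hs.mul_left (C ^ 2))
  calc |g k| ^ 2 ≤ (C * |f k|) ^ 2 := by
        apply pow_le_pow_left₀ (abs_nonneg _) (h k)
    _ = C ^ 2 * |f k| ^ 2 := by ring

lemma norm_of_le {f g : lp (fun _ : ℕ => ℝ) 2} {C : ℝ} (hC : 0 ≤ C)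
    (h : ∀ k, |g k| ≤ C * |f k|) : ‖g‖ ≤ C * ‖f‖ := by
  refine lp.norm_le_of_forall_sum_le (by norm_num) (mul_nonneg hC (norm_nonneg f)) ?_
  intro t
  have h2 : (2 : ℝ≥0∞).toReal = 2 := by norm_num
  have hb := lp.sum_rpow_le_norm_rpow (p := 2) (by norm_num) f t
  rw [h2] at hb ⊢
  simp only [Real.norm_eq_abs, Real.rpow_two] at hb ⊢
  calc ∑ i ∈ t, |g i| ^ 2 ≤ ∑ i ∈ t, C ^ 2 * |f i| ^ 2 := by
        refine Finset.sum_le_sum fun i _ => ?_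
        calc |g i| ^ 2 ≤ (C * |f i|) ^ 2 := pow_le_pow_left₀ (abs_nonneg _) (h i) 2
          _ = C ^ 2 * |f i| ^ 2 := by ring
    _ = C ^ 2 * ∑ i ∈ t, |f i| ^ 2 := by rw [Finset.mul_sum]
    _ ≤ C ^ 2 * ‖f‖ ^ 2 := by
        apply mul_le_mul_of_nonneg_left hb (by positivity)
    _ = (C * ‖f‖) ^ 2 := by ring

lemma expDeriv (L t : ℝ) : HasDerivAt (fun u : ℝ => rexp (-(u * L))) (-L * rexp (-(t * L))) t := by
  have h : HasDerivAt (fun u : ℝ => -(u * L)) (-L) t := by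
    exact (((hasDerivAt_id t).mul_const L).neg).congr_deriv (by ring)
  simpa [mul_comm] using h.exp

lemma expDeriv2 (L t : ℝ) :
    HasDerivAt (fun u : ℝ => -L * rexp (-(u * L))) (L ^ 2 * rexp (-(t * L))) t := by
  have := (expDeriv L t).const_mul (-L)
  exact this.congr_deriv (by ring)

-- second-order Taylor bound
lemma taylorC (L s x M : ℝ)
    (hb : ∀ t ∈ Set.uIcc s x, L ^ 2 * rexp (-(t * L)) ≤ M) :
    |rexp (-(x * L)) - rexp (-(s * L)) - (x - s) * (-L * rexp (-(s * L)))| ≤ M * (x - s) ^ 2 := by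
  have hM : 0 ≤ M := le_trans (by positivity) (hb s Set.left_mem_uIcc)
  set c := -L * rexp (-(s * L)) with hc
  -- step 1: |φ' t - c| ≤ M * |x - s| on uIcc s x
  have step1 : ∀ t ∈ Set.uIcc s x, ‖(-L * rexp (-(t * L))) - c‖ ≤ M * |x - s| := by
    intro t ht
    have h1 : ‖(-L * rexp (-(t * L))) - c‖ ≤ M * ‖t - s‖ :=
      Convex.norm_image_sub_le_of_norm_hasDerivWithin_le
        (fun u _ => (expDeriv2 L u).hasDerivWithinAt)
        (fun u hu => by
          rw [Real.norm_eq_abs, abs_of_nonneg (by positivity)]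
          exact hb u hu)
        (convex_uIcc s x) Set.left_mem_uIcc ht
    refine h1.trans ?_
    apply mul_le_mul_of_nonneg_left _ hM
    rw [Real.norm_eq_abs]
    rcases Set.mem_uIcc.mp ht with ⟨h1, h2⟩ | ⟨h1, h2⟩ <;>
      rw [abs_le] <;> constructor <;> cases abs_cases (x - s) <;> linarith
  -- step 2: apply MVT to g u = exp(-(uL)) - (u - s) * c
  have hg : ∀ t : ℝ, HasDerivAt (fun u : ℝ => rexp (-(u * L)) - (u - s) * c)
      ((-L * rexp (-(t * L))) - c) t := by
    intro t
    have h2 : HasDerivAt (fun u : ℝ => (u - s) * c) c t := by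
      simpa using ((hasDerivAt_id t).sub_const s).mul_const c
    exact (expDeriv L t).sub h2
  have key : ‖(rexp (-(x * L)) - (x - s) * c) - (rexp (-(s * L)) - (s - s) * c)‖
      ≤ M * |x - s| * ‖x - s‖ :=
    Convex.norm_image_sub_le_of_norm_hasDerivWithin_le
      (fun u _ => (hg u).hasDerivWithinAt) step1
      (convex_uIcc s x) Set.left_mem_uIcc Set.right_mem_uIcc
  rw [Real.norm_eq_abs] at key
  calc |rexp (-(x * L)) - rexp (-(s * L)) - (x - s) * c|
      = |(rexp (-(x * L)) - (x - s) * c) - (rexp (-(s * L)) - (s - s) * c)| := by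
        congr 1; ring
    _ ≤ M * |x - s| * |x - s| := key
    _ = M * (x - s) ^ 2 := by rw [← sq_abs (x - s)]; ring

-- uniform second-derivative bound
lemma boundD (lam1 lamk a t : ℝ) (hlam1 : 0 < lam1) (hk : lam1 ≤ lamk)
    (ha : 0 < a) (hta : a ≤ t) (ht1 : t ≤ 1) :
    (log lamk) ^ 2 * rexp (-(t * log lamk)) ≤ 4 / a ^ 2 + (log lam1) ^ 2 * rexp |log lam1| := by
  set L := log lamk with hL
  have hll : log lam1 ≤ L := Real.log_le_log hlam1 hk
  rcases le_or_gt 0 L with h0 | h0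
  · have h1 : rexp (-(t * L)) ≤ rexp (-(a * L)) := by
      apply Real.exp_le_exp.mpr; nlinarith
    have h2 : a * L / 2 ≤ rexp (a * L / 2) := by linarith [Real.add_one_le_exp (a * L / 2)]
    have h3 : (a * L / 2) ^ 2 ≤ rexp (a * L / 2) ^ 2 :=
      pow_le_pow_left₀ (by positivity) h2 2
    have h4 : rexp (a * L / 2) ^ 2 = rexp (a * L) := by
      rw [sq, ← Real.exp_add]; ring_nf
    have h5 : a ^ 2 * L ^ 2 / 4 ≤ rexp (a * L) := by nlinarith
    have h6 : L ^ 2 * rexp (-(a * L)) ≤ 4 / a ^ 2 := by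
      rw [Real.exp_neg, ← div_eq_mul_inv, div_le_div_iff₀ (Real.exp_pos _) (by positivity)]
      nlinarith [Real.exp_pos (a * L)]
    have h7 : L ^ 2 * rexp (-(t * L)) ≤ 4 / a ^ 2 := by nlinarith [sq_nonneg L]
    have h8 : 0 ≤ (log lam1) ^ 2 * rexp |log lam1| := by positivity
    linarith
  · have hl1 : log lam1 < 0 := lt_of_le_of_lt hll h0
    have h1 : L ^ 2 ≤ (log lam1) ^ 2 := by nlinarith
    have h2 : rexp (-(t * L)) ≤ rexp |log lam1| := by
      apply Real.exp_le_exp.mpr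
      rw [abs_of_neg hl1]
      nlinarith
    have h3 : L ^ 2 * rexp (-(t * L)) ≤ (log lam1) ^ 2 * rexp |log lam1| := by
      apply mul_le_mul h1 h2 (Real.exp_nonneg _) (by positivity)
    have h4 : (0:ℝ) ≤ 4 / a ^ 2 := by positivity
    linarith

-- first-derivative bound
lemma boundD1 (lam1 lamk s : ℝ) (hlam1 : 0 < lam1) (hk : lam1 ≤ lamk)
    (hs : 0 < s) (hs1 : s ≤ 1) :
    |log lamk| * rexp (-(s * log lamk)) ≤ 1 / s + |log lam1| * rexp |log lam1| := by
  set L := log lamk with hL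
  have hll : log lam1 ≤ L := Real.log_le_log hlam1 hk
  rcases le_or_gt 0 L with h0 | h0
  · have h2 : s * L ≤ rexp (s * L) := by linarith [Real.add_one_le_exp (s * L)]
    have h6 : |L| * rexp (-(s * L)) ≤ 1 / s := by
      rw [abs_of_nonneg h0, Real.exp_neg, ← div_eq_mul_inv,
        div_le_div_iff₀ (Real.exp_pos _) hs]
      nlinarith [Real.exp_pos (s * L)]
    have h8 : 0 ≤ |log lam1| * rexp |log lam1| := by positivity
    linarith
  · have hl1 : log lam1 < 0 := lt_of_le_of_lt hll h0
    have h1 : |L| ≤ |log lam1| := by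
      rw [abs_of_neg h0, abs_of_neg hl1]; linarith
    have h2 : rexp (-(s * L)) ≤ rexp |log lam1| := by
      apply Real.exp_le_exp.mpr
      rw [abs_of_neg hl1]
      nlinarith
    have h3 : |L| * rexp (-(s * L)) ≤ |log lam1| * rexp |log lam1| :=
      mul_le_mul h1 h2 (Real.exp_nonneg _) (abs_nonneg _)
    have h4 : (0:ℝ) ≤ 1 / s := by positivity
    linarith

/-- For every `s ∈ (0,1)` the sequence `k ↦ -(log λ_k) λ_k^{-s} f_k` belongs to `ℓ²`,
and the control-to-state map `S` is (Fréchet) differentiable at `s` with derivative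
any element `u1` of `ℓ²` having these coordinates. -/
theorem hasDerivAt_state (lam1 : ℝ) (hlam1 : 0 < lam1) (lam : ℕ → ℝ)
    (hlam : ∀ k, lam1 ≤ lam k) (f : lp (fun _ : ℕ => ℝ) 2)
    (S : ℝ → lp (fun _ : ℕ => ℝ) 2)
    (hS : ∀ s ∈ Set.Ioo (0 : ℝ) 1, ∀ k, S s k = lam k ^ (-s) * f k) :
    ∀ s ∈ Set.Ioo (0 : ℝ) 1,
      Memℓp (fun k => -(Real.log (lam k)) * lam k ^ (-s) * f k) 2 ∧
      ∀ u1 : lp (fun _ : ℕ => ℝ) 2,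
        (∀ k, u1 k = -(Real.log (lam k)) * lam k ^ (-s) * f k) →
        HasDerivAt S u1 s := by
  intro s hs
  obtain ⟨hs0, hs1⟩ := hs
  have hlampos : ∀ k, (0:ℝ) < lam k := fun k => lt_of_lt_of_le hlam1 (hlam k)
  have hrpow : ∀ (k : ℕ) (t : ℝ), lam k ^ (-t) = rexp (-(t * log (lam k))) := by
    intro k t
    rw [Real.rpow_def_of_pos (hlampos k)]
    ring_nf
  set M0 : ℝ := 1 / s + |log lam1| * rexp |log lam1| with hM0
  have hmem : Memℓp (fun k => -(Real.log (lam k)) * lam k ^ (-s) * f k) 2 := by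
    apply mem_of_le (lp.memℓp f) (C := M0)
    intro k
    have e : |(-(log (lam k)) * lam k ^ (-s) * f k)|
        = (|log (lam k)| * rexp (-(s * log (lam k)))) * |f k| := by
      rw [hrpow k s, abs_mul, abs_mul, abs_neg, abs_of_nonneg (Real.exp_nonneg _)]
    rw [e]
    exact mul_le_mul_of_nonneg_right
      (boundD1 lam1 (lam k) s hlam1 (hlam k) hs0 hs1.le) (abs_nonneg _)
  refine ⟨hmem, ?_⟩
  intro u1 hu1
  rw [hasDerivAt_iff_isLittleO]
  set a : ℝ := s / 2 with ha
  set δ : ℝ := min (s / 2) ((1 - s) / 2) with hδ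
  have hδ0 : 0 < δ := lt_min (by linarith) (by linarith)
  set M : ℝ := 4 / a ^ 2 + (log lam1) ^ 2 * rexp |log lam1| with hM
  have hMpos : 0 ≤ M := by positivity
  set K : ℝ := M * ‖f‖ with hK
  have hK0 : 0 ≤ K := mul_nonneg hMpos (norm_nonneg f)
  -- main estimate
  have main : ∀ x : ℝ, |x - s| ≤ δ → ‖S x - S s - (x - s) • u1‖ ≤ K * (x - s) ^ 2 := by
    intro x hx
    have hxδ1 : x - s ≤ δ := (abs_le.mp hx).2
    have hxδ2 : -δ ≤ x - s := (abs_le.mp hx).1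
    have hδs : δ ≤ s / 2 := min_le_left _ _
    have hδ1 : δ ≤ (1 - s) / 2 := min_le_right _ _
    have hxI : x ∈ Set.Ioo (0:ℝ) 1 := ⟨by linarith, by linarith⟩
    have hco : ∀ k, |(S x - S s - (x - s) • u1) k| ≤ (M * (x - s) ^ 2) * |f k| := by
      intro k
      have hcoord : (S x - S s - (x - s) • u1) k
          = (rexp (-(x * log (lam k))) - rexp (-(s * log (lam k)))
              - (x - s) * (-(log (lam k)) * rexp (-(s * log (lam k))))) * f k := by
        have e1 : (S x - S s - (x - s) • u1) k = S x k - S s k - (x - s) * u1 k := by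
          simp only [lp.coeFn_sub, lp.coeFn_smul, Pi.sub_apply, Pi.smul_apply, smul_eq_mul]
        rw [e1, hS x hxI k, hS s ⟨hs0, hs1⟩ k, hu1 k, hrpow, hrpow]
        ring
      rw [hcoord, abs_mul]
      apply mul_le_mul_of_nonneg_right _ (abs_nonneg _)
      apply taylorC
      intro t ht
      rcases Set.mem_uIcc.mp ht with ⟨h1, h2⟩ | ⟨h1, h2⟩ <;>
        exact boundD lam1 (lam k) a t hlam1 (hlam k) (by linarith) (by linarith) (by linarith)
    calc ‖S x - S s - (x - s) • u1‖ ≤ (M * (x - s) ^ 2) * ‖f‖ :=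
          norm_of_le (by positivity) hco
      _ = K * (x - s) ^ 2 := by rw [hK]; ring
  rw [Asymptotics.isLittleO_iff]
  intro c hc
  rw [Metric.eventually_nhds_iff]
  refine ⟨min δ (c / (K + 1)), lt_min hδ0 (by positivity), ?_⟩
  intro x hx
  rw [Real.dist_eq] at hx
  have hx1 : |x - s| ≤ δ := le_of_lt (lt_of_lt_of_le hx (min_le_left _ _))
  have hx2 : |x - s| ≤ c / (K + 1) := le_of_lt (lt_of_lt_of_le hx (min_le_right _ _))
  calc ‖S x - S s - (x - s) • u1‖ ≤ K * (x - s) ^ 2 := main x hx1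
    _ = K * |x - s| * |x - s| := by rw [← sq_abs (x - s)]; ring
    _ ≤ c * ‖x - s‖ := by
        rw [Real.norm_eq_abs]
        have h1 : K * |x - s| ≤ K * (c / (K + 1)) :=
          mul_le_mul_of_nonneg_left hx2 hK0
        have h2 : K * (c / (K + 1)) ≤ c := by
          rw [mul_div_assoc', div_le_iff₀ (by linarith : (0:ℝ) < K + 1)]
          nlinarith
        exact mul_le_mul_of_nonneg_right (h1.trans h2) (abs_nonneg _)
end

section
/- There exists a constant C > 0, depending only on λ₁, such that for every s ∈ (0,1) and every real h with |h| < s/2, one has the quantitative Taylor estimate ‖S(s+h) − S(s) − h·u^{(1)}(s)‖ ≤ C · h² · s^{-2} · ‖f‖. -/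
open Real

private theorem myExpTaylor (x : ℝ) : |Real.exp x - 1 - x| ≤ 3 * x ^ 2 * Real.exp |x| := by
  rcases le_or_gt |x| 1 with h | h
  · have h1 := Real.abs_exp_sub_one_sub_id_le h
    nlinarith [Real.one_le_exp (abs_nonneg x), sq_nonneg x]
  · have h1 : Real.exp x ≤ Real.exp |x| := Real.exp_le_exp.2 (le_abs_self x)
    have h2 : (1:ℝ) ≤ Real.exp |x| := Real.one_le_exp (abs_nonneg x)
    have h3 : |x| ≤ Real.exp |x| := by
      have := Real.add_one_le_exp |x|; linarith
    have h4 : (1:ℝ) ≤ x ^ 2 := by nlinarith [sq_abs x]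
    have h5 : 0 < Real.exp x := Real.exp_pos x
    have h6 := le_abs_self x
    have h7 := neg_abs_le x
    rw [abs_sub_le_iff]
    constructor <;> nlinarith

private theorem myKeyBound (lam1 : ℝ) (L s h : ℝ)
    (hL : Real.log lam1 ≤ L) (hs : 0 < s) (hs1 : s < 1) (hh : |h| < s / 2) :
    L ^ 2 * Real.exp (-s * L + |h| * |L|) ≤
      (16 + |Real.log lam1| ^ 2 * Real.exp (2 * |Real.log lam1|)) / s ^ 2 := by
  set A := |Real.log lam1| with hA
  have hA0 : 0 ≤ A := abs_nonneg _
  have hs2 : 0 < s ^ 2 := by positivity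
  rcases le_or_gt 0 L with hL0 | hL0
  · have habs : |L| = L := abs_of_nonneg hL0
    have hexp : -s * L + |h| * |L| ≤ -(s/2) * L := by
      rw [habs]; nlinarith [abs_nonneg h]
    have key : L ^ 2 * Real.exp (-(s/2) * L) ≤ 16 / s ^ 2 := by
      have ht : 0 ≤ s * L / 2 := by positivity
      have h1 : 1 + s*L/2/2 ≤ Real.exp (s*L/2/2) := Real.add_one_le_exp _ |>.trans_eq' (by ring)
      have h2 : Real.exp (s*L/2) = Real.exp (s*L/2/2) * Real.exp (s*L/2/2) := by
        rw [← Real.exp_add]; ring_nf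
      have h3 : (s*L/2)^2 / 4 ≤ Real.exp (s*L/2) := by nlinarith [Real.exp_pos (s*L/2/2)]
      have h4 : Real.exp (-(s/2) * L) = (Real.exp (s*L/2))⁻¹ := by
        rw [← Real.exp_neg]; ring_nf
      rw [h4, ← div_eq_mul_inv, div_le_div_iff₀ (Real.exp_pos _) hs2]
      nlinarith [Real.exp_pos (s*L/2)]
    have := mul_le_mul_of_nonneg_left (Real.exp_le_exp.2 hexp) (sq_nonneg L)
    have hAe : 0 ≤ A ^ 2 * Real.exp (2*A) := by positivity
    calc L ^ 2 * Real.exp (-s * L + |h| * |L|) ≤ L ^ 2 * Real.exp (-(s/2)*L) := this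
      _ ≤ 16 / s ^ 2 := key
      _ ≤ (16 + A ^ 2 * Real.exp (2*A)) / s ^ 2 := by
          rw [div_le_div_iff₀ hs2 hs2]; nlinarith
  · have habs : |L| = -L := abs_of_neg hL0
    have hLA : -L ≤ A := by
      have h2 : -(Real.log lam1) ≤ A := neg_le_abs _
      linarith
    have hLabs : |L| ≤ A := by rw [habs]; exact hLA
    have hexp : -s * L + |h| * |L| ≤ 2 * A := by
      have h1 : -s * L ≤ A := by nlinarith
      have h2 : |h| * |L| ≤ A := by nlinarith [abs_nonneg h, abs_nonneg L]
      linarith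
    have hL2 : L ^ 2 ≤ A ^ 2 := by nlinarith [abs_nonneg L, sq_abs L]
    have key : L ^ 2 * Real.exp (-s * L + |h| * |L|) ≤ A ^ 2 * Real.exp (2*A) := by
      have := Real.exp_le_exp.2 hexp
      nlinarith [Real.exp_pos (-s * L + |h| * |L|), Real.exp_pos (2*A), sq_nonneg L]
    have hs2le : s ^ 2 ≤ 1 := by nlinarith
    have hnum : 0 ≤ 16 + A ^ 2 * Real.exp (2*A) := by positivity
    calc L ^ 2 * Real.exp (-s * L + |h| * |L|) ≤ A ^ 2 * Real.exp (2*A) := key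
      _ ≤ 16 + A ^ 2 * Real.exp (2*A) := by linarith
      _ ≤ (16 + A ^ 2 * Real.exp (2*A)) / s ^ 2 := by
          rw [le_div_iff₀ hs2]; nlinarith

private theorem myNormLe (v f : lp (fun _ : ℕ => ℝ) 2) (M : ℝ) (hM : 0 ≤ M)
    (hv : ∀ k, ‖v k‖ ≤ M * ‖f k‖) : ‖v‖ ≤ M * ‖f‖ := by
  have hp : 0 < (2 : ENNReal).toReal := by norm_num
  have hsumf := (lp.memℓp f).summable hp
  have hsumv := (lp.memℓp v).summable hp
  set t := (2 : ENNReal).toReal with ht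
  refine lp.norm_le_of_tsum_le hp (by positivity) ?_
  have hsumr : Summable (fun i => (M * ‖f i‖) ^ t) :=
    (hsumf.mul_left (M ^ t)).congr fun i => (Real.mul_rpow hM (norm_nonneg _)).symm
  calc ∑' i, ‖v i‖ ^ t ≤ ∑' i, (M * ‖f i‖) ^ t :=
        Summable.tsum_le_tsum (fun i => Real.rpow_le_rpow (norm_nonneg _) (hv i) hp.le) hsumv hsumr
    _ = ∑' i, M ^ t * ‖f i‖ ^ t := by
        refine tsum_congr fun i => Real.mul_rpow hM (norm_nonneg _)
    _ = M ^ t * ∑' i, ‖f i‖ ^ t := tsum_mul_left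
    _ = M ^ t * ‖f‖ ^ t := by rw [← lp.norm_rpow_eq_tsum hp]
    _ = (M * ‖f‖) ^ t := (Real.mul_rpow hM (norm_nonneg _)).symm

/-- Quantitative Taylor estimate: there is `C > 0`, depending only on `λ₁`, such that for every
`s ∈ (0,1)` and every real `h` with `|h| < s/2`,
`‖S(s+h) − S(s) − h·u¹(s)‖ ≤ C h² s⁻² ‖f‖`. -/
theorem taylor_estimate_state (lam1 : ℝ) (hlam1 : 0 < lam1) :
    ∃ C : ℝ, 0 < C ∧
      ∀ (lam : ℕ → ℝ), (∀ k, lam1 ≤ lam k) →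
      ∀ (f : lp (fun _ : ℕ => ℝ) 2) (S : ℝ → lp (fun _ : ℕ => ℝ) 2)
        (u1 : ℝ → lp (fun _ : ℕ => ℝ) 2),
        (∀ s : ℝ, 0 < s → ∀ k, S s k = lam k ^ (-s) * f k) →
        (∀ s : ℝ, 0 < s → ∀ k, u1 s k = -(Real.log (lam k)) * lam k ^ (-s) * f k) →
        ∀ s ∈ Set.Ioo (0 : ℝ) 1, ∀ h : ℝ, |h| < s / 2 →
          ‖S (s + h) - S s - h • u1 s‖ ≤ C * h ^ 2 / s ^ 2 * ‖f‖ := by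
  set A := |Real.log lam1| with hA
  set K : ℝ := 16 + A ^ 2 * Real.exp (2 * A) with hK
  have hKpos : 0 < K := by positivity
  refine ⟨3 * K, by positivity, ?_⟩
  intro lam hlam f S u1 hS hu1 s hsIoo h hh
  obtain ⟨hs, hs1⟩ := hsIoo
  have hs2 : 0 < s ^ 2 := by positivity
  have hsh : 0 < s + h := by
    have := neg_abs_le h
    have : -(s/2) < h := by have := (abs_lt.mp hh).1; linarith
    linarith
  set v := S (s + h) - S s - h • u1 s with hv
  have hM0 : 0 ≤ 3 * K * h ^ 2 / s ^ 2 := by positivity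
  have hcoord : ∀ k, ‖v k‖ ≤ (3 * K * h ^ 2 / s ^ 2) * ‖f k‖ := by
    intro k
    have hak : 0 < lam k := lt_of_lt_of_le hlam1 (hlam k)
    set L := Real.log (lam k) with hL
    set F := (f : ∀ _ : ℕ, ℝ) k with hF
    have hvk : (v : ∀ _ : ℕ, ℝ) k = Real.exp (-s * L) * (Real.exp (-h * L) - 1 - (-h * L)) * F := by
      have h1 : (v : ∀ _ : ℕ, ℝ) k = S (s + h) k - S s k - h * u1 s k := by
        simp [hv, lp.coeFn_sub, lp.coeFn_smul, Pi.sub_apply, Pi.smul_apply, smul_eq_mul]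
        rfl
      rw [h1, hS (s + h) hsh k, hS s hs k, hu1 s hs k,
        Real.rpow_def_of_pos hak, Real.rpow_def_of_pos hak]
      have e1 : Real.exp (L * -(s + h)) = Real.exp (-s * L) * Real.exp (-h * L) := by
        rw [← Real.exp_add]; ring_nf
      have e2 : Real.exp (L * -s) = Real.exp (-s * L) := by ring_nf
      rw [e1, e2]; ring
    have hLb : Real.log lam1 ≤ L := Real.log_le_log hlam1 (hlam k)
    have habs : ‖(v : ∀ _ : ℕ, ℝ) k‖ =
        Real.exp (-s * L) * |Real.exp (-h * L) - 1 - (-h * L)| * ‖F‖ := by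
      rw [hvk]; rw [Real.norm_eq_abs, Real.norm_eq_abs, abs_mul, abs_mul,
        abs_of_pos (Real.exp_pos _)]
    have htay := myExpTaylor (-h * L)
    have hx2 : (-h * L) ^ 2 = h ^ 2 * L ^ 2 := by ring
    have hxabs : |(-h * L)| = |h| * |L| := by rw [abs_mul, abs_neg]
    have hFnn : (0:ℝ) ≤ ‖F‖ := norm_nonneg _
    have step1 : ‖(v : ∀ _ : ℕ, ℝ) k‖ ≤
        Real.exp (-s * L) * (3 * (h ^ 2 * L ^ 2) * Real.exp (|h| * |L|)) * ‖F‖ := by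
      rw [habs]
      have := myExpTaylor (-h * L)
      rw [hx2, hxabs] at this
      have he : 0 ≤ Real.exp (-s * L) := (Real.exp_pos _).le
      exact mul_le_mul_of_nonneg_right (mul_le_mul_of_nonneg_left this he) hFnn
    have step2 : Real.exp (-s * L) * (3 * (h ^ 2 * L ^ 2) * Real.exp (|h| * |L|)) =
        3 * h ^ 2 * (L ^ 2 * Real.exp (-s * L + |h| * |L|)) := by
      rw [Real.exp_add]; ring
    have hkey := myKeyBound lam1 L s h hLb hs hs1 hh
    calc ‖(v : ∀ _ : ℕ, ℝ) k‖
        ≤ Real.exp (-s * L) * (3 * (h ^ 2 * L ^ 2) * Real.exp (|h| * |L|)) * ‖F‖ := step1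
      _ = 3 * h ^ 2 * (L ^ 2 * Real.exp (-s * L + |h| * |L|)) * ‖F‖ := by rw [step2]
      _ ≤ 3 * h ^ 2 * (K / s ^ 2) * ‖F‖ := by
          apply mul_le_mul_of_nonneg_right ?_ hFnn
          apply mul_le_mul_of_nonneg_left hkey (by positivity)
      _ = (3 * K * h ^ 2 / s ^ 2) * ‖F‖ := by ring
  have := myNormLe v f (3 * K * h ^ 2 / s ^ 2) hM0 hcoord
  calc ‖v‖ ≤ 3 * K * h ^ 2 / s ^ 2 * ‖f‖ := this
    _ = 3 * K * h ^ 2 / s ^ 2 * ‖f‖ := rfl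
end

section
/- For every natural number m and every s ∈ (0,1), the element u^{(m)}(s) belongs to H and the map t ↦ u^{(m)}(t) from (0,1) to H has derivative u^{(m+1)}(s) at s. In particular, S is three times Fréchet differentiable on (0,1), with first derivative u^{(1)}, second derivative u^{(2)}, and third derivative u^{(3)}. -/
open Real

lemma aux_log_le {x ε : ℝ} (hx : 1 ≤ x) (hε : 0 < ε) : Real.log x ≤ x ^ ε / ε := by
  have hx0 : (0:ℝ) < x := lt_of_lt_of_le one_pos hx
  have h1 : Real.log (x ^ ε) ≤ x ^ ε - 1 := Real.log_le_sub_one_of_pos (Real.rpow_pos_of_pos hx0 ε)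
  rw [Real.log_rpow hx0] at h1
  have h2 : ε * Real.log x ≤ x ^ ε := h1.trans (by linarith)
  rw [le_div_iff₀ hε]
  linarith

lemma aux_bound (lam1 : ℝ) (hlam1 : 0 < lam1) (j : ℕ) (a : ℝ) (ha : 0 < a) :
    ∃ C : ℝ, 0 ≤ C ∧ ∀ x : ℝ, lam1 ≤ x → ∀ t : ℝ, a ≤ t → t ≤ 1 →
      |Real.log x| ^ j * x ^ (-t) ≤ C := by
  refine ⟨max (((j:ℝ)/a)^j) (|Real.log lam1| ^ j * lam1⁻¹),
    le_trans (by positivity) (le_max_left _ _), ?_⟩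
  intro x hx t hat ht1
  have hx0 : (0:ℝ) < x := lt_of_lt_of_le hlam1 hx
  rcases le_or_gt 1 x with h1x | hx1
  · refine le_trans ?_ (le_max_left _ _)
    rcases Nat.eq_zero_or_pos j with rfl | hj
    · simpa using Real.rpow_le_one_of_one_le_of_nonpos h1x (by linarith)
    · have hj' : (0:ℝ) < j := by exact_mod_cast hj
      have hε : (0:ℝ) < a / j := div_pos ha hj'
      have hlog : |Real.log x| = Real.log x := abs_of_nonneg (Real.log_nonneg h1x)
      have h2 : Real.log x ≤ ((j:ℝ)/a) * x ^ (a/(j:ℝ)) := by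
        calc Real.log x ≤ x ^ (a/(j:ℝ)) / (a/(j:ℝ)) := aux_log_le h1x hε
          _ = ((j:ℝ)/a) * x ^ (a/(j:ℝ)) := by rw [div_div_eq_mul_div]; ring
      have h3 : |Real.log x| ^ j ≤ (((j:ℝ)/a) * x ^ (a/(j:ℝ))) ^ j := by
        rw [hlog]
        exact pow_le_pow_left₀ (Real.log_nonneg h1x) h2 j
      have h4 : (((j:ℝ)/a) * x ^ (a/(j:ℝ))) ^ j = ((j:ℝ)/a)^j * x ^ a := by
        rw [mul_pow, ← Real.rpow_natCast (x ^ (a/(j:ℝ))) j, ← Real.rpow_mul hx0.le]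
        congr 2
        field_simp
      calc |Real.log x| ^ j * x ^ (-t) ≤ ((j:ℝ)/a)^j * x ^ a * x ^ (-t) := by
            apply mul_le_mul_of_nonneg_right (h4 ▸ h3) (Real.rpow_nonneg hx0.le _)
        _ = ((j:ℝ)/a)^j * x ^ (a + -t) := by rw [mul_assoc, ← Real.rpow_add hx0]
        _ ≤ ((j:ℝ)/a)^j * 1 := by
            apply mul_le_mul_of_nonneg_left
              (Real.rpow_le_one_of_one_le_of_nonpos h1x (by linarith)) (by positivity)
        _ = ((j:ℝ)/a)^j := mul_one _
  · refine le_trans ?_ (le_max_right _ _)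
    have hlx : |Real.log x| ≤ |Real.log lam1| := by
      have h1 : Real.log x ≤ 0 := Real.log_nonpos hx0.le hx1.le
      have h2 : Real.log lam1 ≤ Real.log x := Real.log_le_log hlam1 hx
      rw [abs_of_nonpos h1]
      linarith [neg_le_abs (Real.log lam1)]
    have hrt : x ^ (-t) ≤ lam1⁻¹ := by
      calc x ^ (-t) ≤ x ^ (-1 : ℝ) :=
            Real.rpow_le_rpow_of_exponent_ge hx0 hx1.le (by linarith)
        _ = x⁻¹ := Real.rpow_neg_one x
        _ ≤ lam1⁻¹ := inv_anti₀ hlam1 hx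
    exact mul_le_mul (pow_le_pow_left₀ (abs_nonneg _) hlx j) hrt
      (Real.rpow_nonneg hx0.le _) (by positivity)

lemma aux_hasDerivAt {x : ℝ} (hx : 0 < x) (c : ℝ) (m : ℕ) (s : ℝ) :
    HasDerivAt (fun t : ℝ => (-1:ℝ)^m * Real.log x ^ m * x ^ (-t) * c)
      ((-1:ℝ)^(m+1) * Real.log x ^ (m+1) * x ^ (-s) * c) s := by
  have h0 : HasDerivAt (fun t : ℝ => x ^ (-t)) (x ^ (-s) * Real.log x * (-1)) s :=
    (Real.hasStrictDerivAt_const_rpow hx (-s)).hasDerivAt.comp s (hasDerivAt_neg s)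
  have := (h0.const_mul ((-1:ℝ)^m * Real.log x ^ m)).mul_const c
  refine this.congr_deriv ?_
  rw [pow_succ, pow_succ]
  ring

lemma aux_memlp {x : ℕ → ℝ} (g : lp (fun _ : ℕ => ℝ) 2) (h : ∀ k, |x k| ≤ |g k|) :
    Memℓp x 2 := by
  apply memℓp_gen
  refine Summable.of_nonneg_of_le (fun k => ?_) (fun k => ?_)
    ((lp.memℓp g).summable (by norm_num))
  · positivity
  · exact Real.rpow_le_rpow (norm_nonneg _) (h k) ENNReal.toReal_nonneg

lemma aux_norm_le (x g : lp (fun _ : ℕ => ℝ) 2) (h : ∀ k, |x k| ≤ |g k|) : ‖x‖ ≤ ‖g‖ := by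
  have hp : 0 < ENNReal.toReal 2 := by norm_num
  apply lp.norm_le_of_forall_sum_le hp (norm_nonneg g)
  intro s
  refine le_trans (Finset.sum_le_sum fun i _ => ?_) (lp.sum_rpow_le_norm_rpow hp g s)
  exact Real.rpow_le_rpow (norm_nonneg _) (h i) hp.le

/-- For every `m : ℕ` and every `s ∈ (0,1)`, the sequence
`k ↦ (−1)^m (log λ_k)^m λ_k^{−s} f_k` belongs to `ℓ²` and the map `t ↦ u⁽ᵐ⁾(t)` has derivative
`u⁽ᵐ⁺¹⁾(s)` at `s`.  In particular (taking `m = 0,1,2`) the control-to-state map `S = u⁽⁰⁾` is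
three times differentiable on `(0,1)`, with derivatives `u⁽¹⁾`, `u⁽²⁾` and `u⁽³⁾`. -/
theorem hasDerivAt_state_iterated (lam1 : ℝ) (hlam1 : 0 < lam1) (lam : ℕ → ℝ)
    (hlam : ∀ k, lam1 ≤ lam k) (f : lp (fun _ : ℕ => ℝ) 2)
    (U : ℕ → ℝ → lp (fun _ : ℕ => ℝ) 2)
    (hU : ∀ (m : ℕ), ∀ s ∈ Set.Ioo (0 : ℝ) 1, ∀ k,
      U m s k = (-1 : ℝ) ^ m * (Real.log (lam k)) ^ m * lam k ^ (-s) * f k) :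
    ∀ (m : ℕ), ∀ s ∈ Set.Ioo (0 : ℝ) 1,
      Memℓp (fun k => (-1 : ℝ) ^ m * (Real.log (lam k)) ^ m * lam k ^ (-s) * f k) 2 ∧
      HasDerivAt (U m) (U (m + 1) s) s := by
  intro m s hs
  obtain ⟨hs0, hs1⟩ := hs
  set a : ℝ := s/2 with ha_def
  set b : ℝ := (s+1)/2 with hb_def
  have ha0 : 0 < a := by positivity
  have has : a < s := by rw [ha_def]; linarith
  have hsb : s < b := by rw [hb_def]; linarith
  have hb1 : b < 1 := by rw [hb_def]; linarith
  have hIcc : Set.Icc a b ⊆ Set.Ioo (0:ℝ) 1 := fun u hu =>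
    ⟨lt_of_lt_of_le ha0 hu.1, lt_of_le_of_lt hu.2 hb1⟩
  have habs : ∀ (j : ℕ) (t : ℝ) (k : ℕ),
      |(-1:ℝ)^j * Real.log (lam k) ^ j * lam k ^ (-t) * f k|
        = |Real.log (lam k)| ^ j * lam k ^ (-t) * |f k| := by
    intro j t k
    have hxk : (0:ℝ) < lam k := lt_of_lt_of_le hlam1 (hlam k)
    rw [abs_mul, abs_mul, abs_mul, abs_pow, abs_pow, abs_neg, abs_one, one_pow, one_mul,
      abs_of_nonneg (Real.rpow_nonneg hxk.le (-t))]
  constructor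
  · -- Memℓp
    obtain ⟨C, hC0, hC⟩ := aux_bound lam1 hlam1 m a ha0
    apply aux_memlp (C • f)
    intro k
    have hcoord : (C • f : lp (fun _ : ℕ => ℝ) 2) k = C * f k := by
      rw [lp.coeFn_smul]; simp
    rw [hcoord, habs m s k, abs_mul, abs_of_nonneg hC0]
    exact mul_le_mul_of_nonneg_right (hC (lam k) (hlam k) s has.le hs1.le) (abs_nonneg _)
  · -- HasDerivAt
    obtain ⟨C, hC0, hC⟩ := aux_bound lam1 hlam1 (m+2) a ha0
    rw [hasDerivAt_iff_isLittleO]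
    have key : ∀ t ∈ Set.Icc a b,
        ‖U m t - U m s - (t - s) • U (m+1) s‖ ≤ (C * ‖f‖) * (t-s)^2 := by
      intro t ht
      have hsI : s ∈ Set.Icc a b := ⟨has.le, hsb.le⟩
      have h1 : ‖U m t - U m s - (t - s) • U (m+1) s‖ ≤ ‖(C * (t-s)^2) • f‖ := by
        apply aux_norm_le
        intro k
        have hxk : (0:ℝ) < lam k := lt_of_lt_of_le hlam1 (hlam k)
        set L : ℝ := Real.log (lam k) with hL
        set c : ℝ := f k with hc
        set φ : ℕ → ℝ → ℝ := fun j u => (-1:ℝ)^j * L^j * lam k ^ (-u) * c with hφ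
        have hcoord : (U m t - U m s - (t - s) • U (m+1) s) k
            = φ m t - φ m s - (t - s) * φ (m+1) s := by
          have e1 := hU m t (hIcc ht) k
          have e2 := hU m s (hIcc hsI) k
          have e3 := hU (m+1) s (hIcc hsI) k
          rw [lp.coeFn_sub, lp.coeFn_sub, lp.coeFn_smul, Pi.sub_apply, Pi.sub_apply,
            Pi.smul_apply, smul_eq_mul, e1, e2, e3]
        rw [hcoord]
        -- second derivative bound
        have hbd : ∀ u ∈ Set.Icc a b, ‖φ (m+2) u‖ ≤ C * |c| := by
          intro u hu
          rw [Real.norm_eq_abs, hφ]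
          simp only
          rw [habs (m+2) u k]
          exact mul_le_mul_of_nonneg_right
            (hC (lam k) (hlam k) u hu.1 (le_trans hu.2 hb1.le)) (abs_nonneg _)
        -- Lipschitz bound for φ (m+1) on Icc a b
        have hlip : ∀ u ∈ Set.Icc a b, ‖φ (m+1) u - φ (m+1) s‖ ≤ (C * |c|) * ‖u - s‖ := by
          intro u hu
          exact (convex_Icc a b).norm_image_sub_le_of_norm_hasDerivWithin_le
            (fun v hv => (aux_hasDerivAt hxk c (m+1) v).hasDerivWithinAt)
            (fun v hv => hbd v hv) hsI hu
        -- Taylor estimate via g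
        set g : ℝ → ℝ := fun u => φ m u - φ m s - (u - s) * φ (m+1) s with hg
        have hgderiv : ∀ u : ℝ, HasDerivAt g (φ (m+1) u - φ (m+1) s) u := by
          intro u
          have h5 : HasDerivAt (fun v : ℝ => (v - s) * φ (m+1) s) (φ (m+1) s) u := by
            simpa using ((hasDerivAt_id u).sub_const s).mul_const (φ (m+1) s)
          exact ((aux_hasDerivAt hxk c m u).sub_const (φ m s)).sub h5
        have husub : Set.uIcc s t ⊆ Set.Icc a b := Set.uIcc_subset_Icc hsI ht
        have hgt : ‖g t - g s‖ ≤ ((C * |c|) * |t - s|) * ‖t - s‖ := by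
          apply (convex_uIcc s t).norm_image_sub_le_of_norm_hasDerivWithin_le
            (fun v _ => (hgderiv v).hasDerivWithinAt)
            (fun v hv => ?_) Set.left_mem_uIcc (Set.right_mem_uIcc)
          have h6 := hlip v (husub hv)
          have h7 : |v - s| ≤ |t - s| := by
            rcases le_total s t with h | h
            · rw [Set.uIcc_of_le h] at hv
              rw [abs_of_nonneg (by linarith [hv.1]), abs_of_nonneg (by linarith)]
              linarith [hv.2]
            · rw [Set.uIcc_of_ge h] at hv
              rw [abs_of_nonpos (by linarith [hv.2]), abs_of_nonpos (by linarith)]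
              linarith [hv.1]
          calc ‖φ (m+1) v - φ (m+1) s‖ ≤ (C * |c|) * ‖v - s‖ := h6
            _ ≤ (C * |c|) * |t - s| := by
                rw [Real.norm_eq_abs]
                exact mul_le_mul_of_nonneg_left h7 (by positivity)
        have hgs : g s = 0 := by simp [hg]
        have hfinal : |g t| ≤ (C * |c|) * (t - s)^2 := by
          have h8 : |g t - g s| ≤ ((C * |c|) * |t - s|) * |t - s| := by
            simpa [Real.norm_eq_abs] using hgt
          rw [hgs, sub_zero] at h8
          calc |g t| ≤ ((C * |c|) * |t - s|) * |t - s| := h8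
            _ = (C * |c|) * (t - s)^2 := by
                have h9 : |t - s| * |t - s| = (t-s)^2 := by rw [← abs_mul, abs_mul_self, sq]
                rw [mul_assoc, h9]
        have hscoord : ((C * (t-s)^2) • f : lp (fun _ : ℕ => ℝ) 2) k = (C * (t-s)^2) * f k := by
          rw [lp.coeFn_smul]; simp
        rw [hscoord, abs_mul, abs_of_nonneg (by positivity : (0:ℝ) ≤ C * (t-s)^2)]
        calc |g t| ≤ (C * |c|) * (t - s)^2 := hfinal
          _ = C * (t-s)^2 * |f k| := by rw [hc]; ring
      calc ‖U m t - U m s - (t - s) • U (m+1) s‖ ≤ ‖(C * (t-s)^2) • f‖ := h1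
        _ = (C * ‖f‖) * (t-s)^2 := by
            rw [norm_smul, Real.norm_eq_abs, abs_mul, abs_of_nonneg hC0, abs_of_nonneg (sq_nonneg _)]
            ring
    -- from key to isLittleO
    have hbigO : (fun t => U m t - U m s - (t - s) • U (m + 1) s)
        =O[nhds s] (fun t => (t - s)^2) := by
      rw [Asymptotics.isBigO_iff]
      refine ⟨C * ‖f‖, ?_⟩
      filter_upwards [Ioo_mem_nhds has hsb] with t ht
      rw [Real.norm_eq_abs, abs_of_nonneg (sq_nonneg _)]
      exact key t ⟨ht.1.le, ht.2.le⟩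
    have hlittle : (fun t : ℝ => (t - s)^2) =o[nhds s] (fun t => t - s) := by
      have h1 : (fun t : ℝ => t - s) =o[nhds s] (fun _ : ℝ => (1:ℝ)) := by
        rw [Asymptotics.isLittleO_one_iff]
        have : Filter.Tendsto (fun t : ℝ => t - s) (nhds s) (nhds (s - s)) :=
          (continuous_id.sub continuous_const).tendsto s
        simpa using this
      have h2 := h1.mul_isBigO (Asymptotics.isBigO_refl (fun t : ℝ => t - s) (nhds s))
      simpa [sq] using h2
    exact hbigO.trans_isLittleO hlittle
end

section
/- There exists s̄ ∈ (a,b) such that F(s̄) ≤ F(s) for every s ∈ (a,b); that is, the reduced cost functional attains a global minimum at an interior point of (a,b). -/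
open Real Filter

lemma lp_norm_mono (x y : lp (fun _ : ℕ => ℝ) 2) (h : ∀ k, ‖x k‖ ≤ ‖y k‖) : ‖x‖ ≤ ‖y‖ := by
  have hp : (0:ℝ) < (2 : ENNReal).toReal := by norm_num
  apply lp.norm_le_of_tsum_le hp (norm_nonneg y)
  rw [lp.norm_rpow_eq_tsum hp y]
  exact Summable.tsum_le_tsum (fun k => Real.rpow_le_rpow (norm_nonneg _) (h k) hp.le)
    ((lp.memℓp x).summable hp) ((lp.memℓp y).summable hp)

lemma rpow_neg_diff_bound {lam1 x c d : ℝ} (hlam1 : 0 < lam1) (hx : lam1 ≤ x)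
    (hc : 0 < c) (hd : d ≤ 1) {s t : ℝ} (hs : s ∈ Set.Icc c d) (ht : t ∈ Set.Icc c d) :
    |x ^ (-s) - x ^ (-t)| ≤ (1 / c + |Real.log lam1| / lam1) * |s - t| := by
  have hx0 : 0 < x := lt_of_lt_of_le hlam1 hx
  set C : ℝ := 1 / c + |Real.log lam1| / lam1 with hC
  have hC1 : 0 ≤ 1 / c := by positivity
  have hC2 : 0 ≤ |Real.log lam1| / lam1 := by positivity
  have hderiv : ∀ u ∈ Set.Icc c d, HasDerivWithinAt (fun u : ℝ => x ^ (-u))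
      (x ^ (-u) * Real.log x * (-1)) (Set.Icc c d) u := by
    intro u _
    exact (((Real.hasStrictDerivAt_const_rpow hx0 (-u)).hasDerivAt).comp u
      ((hasDerivAt_id u).neg)).hasDerivWithinAt
  have hbound : ∀ u ∈ Set.Icc c d, ‖x ^ (-u) * Real.log x * (-1)‖ ≤ C := by
    intro u hu
    have hu0 : 0 < u := lt_of_lt_of_le hc hu.1
    have hxu : 0 < x ^ (-u) := Real.rpow_pos_of_pos hx0 _
    rw [norm_mul, norm_mul]
    simp only [norm_neg, norm_one, mul_one, Real.norm_eq_abs]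
    rcases le_or_gt 1 x with h1 | h1
    · have hlog : 0 ≤ Real.log x := Real.log_nonneg h1
      have h2 : x ^ (-u) ≤ x ^ (-c) := Real.rpow_le_rpow_of_exponent_le h1 (by linarith [hu.1])
      have hxc : 0 < x ^ c := Real.rpow_pos_of_pos hx0 c
      have h3 : Real.log x ≤ x ^ c / c := by
        have h4 := Real.log_le_sub_one_of_pos hxc
        rw [Real.log_rpow hx0] at h4
        rw [le_div_iff₀ hc]
        nlinarith
      have h5 : x ^ (-u) * Real.log x ≤ 1 / c := by
        calc x ^ (-u) * Real.log x ≤ x ^ (-c) * (x ^ c / c) := by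
              apply mul_le_mul h2 h3 hlog (le_of_lt (Real.rpow_pos_of_pos hx0 _))
          _ = 1 / c := by
              rw [Real.rpow_neg hx0.le]
              field_simp
        
      calc |x ^ (-u)| * |Real.log x| = x ^ (-u) * Real.log x := by
            rw [abs_of_pos hxu, abs_of_nonneg hlog]
        _ ≤ 1 / c := h5
        _ ≤ C := by simp [hC]; linarith
    · have hlogx : Real.log x ≤ 0 := Real.log_nonpos hx0.le h1.le
      have hlog1 : Real.log lam1 ≤ Real.log x := Real.log_le_log hlam1 hx
      have habs : |Real.log x| ≤ |Real.log lam1| := by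
        rw [abs_of_nonpos hlogx, abs_of_nonpos (hlog1.trans hlogx)]
        linarith
      have hxuge : lam1 ≤ x ^ u := by
        have e1 : lam1 ^ (1:ℝ) ≤ lam1 ^ u :=
          Real.rpow_le_rpow_of_exponent_ge hlam1 (hx.trans h1.le) (hu.2.trans hd)
        have e2 : lam1 ^ u ≤ x ^ u := Real.rpow_le_rpow hlam1.le hx hu0.le
        calc lam1 = lam1 ^ (1:ℝ) := (Real.rpow_one lam1).symm
          _ ≤ lam1 ^ u := e1
          _ ≤ x ^ u := e2
      have hxuinv : x ^ (-u) ≤ 1 / lam1 := by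
        rw [Real.rpow_neg hx0.le, one_div]
        exact inv_anti₀ hlam1 hxuge
      calc |x ^ (-u)| * |Real.log x| ≤ (1 / lam1) * |Real.log lam1| := by
            apply mul_le_mul _ habs (abs_nonneg _) (by positivity)
            rw [abs_of_pos hxu]; exact hxuinv
        _ = |Real.log lam1| / lam1 := by ring
        _ ≤ C := by simp [hC]; linarith
  have := (convex_Icc c d).norm_image_sub_le_of_norm_hasDerivWithin_le hderiv hbound hs ht
  rw [abs_sub_comm (x ^ (-s)), abs_sub_comm s t]
  simpa using this


/-- The reduced cost functional `F(s) = ½‖S(s) − u_d‖² + φ(s)` attains a global minimum at an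
interior point of `(a,b)`. -/
theorem exists_minimizer_reduced_cost (lam1 : ℝ) (hlam1 : 0 < lam1) (lam : ℕ → ℝ)
    (hlam : ∀ k, lam1 ≤ lam k) (f : lp (fun _ : ℕ => ℝ) 2)
    (S : ℝ → lp (fun _ : ℕ => ℝ) 2)
    (hS : ∀ s ∈ Set.Ioo (0 : ℝ) 1, ∀ k, S s k = lam k ^ (-s) * f k)
    (ud : lp (fun _ : ℕ => ℝ) 2) (a b : ℝ) (ha : 0 ≤ a) (hab : a < b) (hb : b ≤ 1)
    (φ : ℝ → ℝ) (hφ0 : ∀ s ∈ Set.Ioo a b, 0 ≤ φ s)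
    (hφconv : ConvexOn ℝ (Set.Ioo a b) φ)
    (hφC2 : ContDiffOn ℝ 2 φ (Set.Ioo a b))
    (hφa : Tendsto φ (nhdsWithin a (Set.Ioi a)) atTop)
    (hφb : Tendsto φ (nhdsWithin b (Set.Iio b)) atTop)
    (F : ℝ → ℝ) (hF : ∀ s ∈ Set.Ioo a b, F s = 1 / 2 * ‖S s - ud‖ ^ 2 + φ s) :
    ∃ sbar ∈ Set.Ioo a b, ∀ s ∈ Set.Ioo a b, F sbar ≤ F s := by
  have hsub : Set.Ioo a b ⊆ Set.Ioo (0:ℝ) 1 := fun s hs =>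
    ⟨lt_of_le_of_lt ha hs.1, lt_of_lt_of_le hs.2 hb⟩
  set s0 : ℝ := (a + b) / 2 with hs0def
  have hs0 : s0 ∈ Set.Ioo a b := ⟨by simp [hs0def]; linarith, by simp [hs0def]; linarith⟩
  obtain ⟨u, hau, hufar⟩ := ((nhdsGT_basis a).eventually_iff).mp
    (hφa.eventually (eventually_gt_atTop (F s0)))
  obtain ⟨v, hvb, hvfar⟩ := ((nhdsLT_basis b).eventually_iff).mp
    (hφb.eventually (eventually_gt_atTop (F s0)))
  set a' : ℝ := min s0 ((a + u) / 2) with ha'def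
  set b' : ℝ := max s0 ((b + v) / 2) with hb'def
  have haa' : a < a' := lt_min hs0.1 (by linarith)
  have ha's0 : a' ≤ s0 := min_le_left _ _
  have hs0b' : s0 ≤ b' := le_max_left _ _
  have hb'b : b' < b := max_lt hs0.2 (by linarith)
  have ha'b' : a' ≤ b' := ha's0.trans hs0b'
  have hK : Set.Icc a' b' ⊆ Set.Ioo a b := fun s hs =>
    ⟨lt_of_lt_of_le haa' hs.1, lt_of_le_of_lt hs.2 hb'b⟩
  have ha'pos : 0 < a' := lt_of_le_of_lt ha haa'
  have hb'1 : b' ≤ 1 := (hb'b.le.trans hb)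
  set C0 : ℝ := 1 / a' + |Real.log lam1| / lam1 with hC0def
  have hC0 : 0 ≤ C0 := by positivity
  -- Lipschitz bound for S on Icc a' b'
  have Slip : ∀ s ∈ Set.Icc a' b', ∀ t ∈ Set.Icc a' b',
      ‖S s - S t‖ ≤ C0 * ‖f‖ * |s - t| := by
    intro s hsK t htK
    have hs01 : s ∈ Set.Ioo (0:ℝ) 1 := hsub (hK hsK)
    have ht01 : t ∈ Set.Ioo (0:ℝ) 1 := hsub (hK htK)
    have key : ‖S s - S t‖ ≤ ‖(C0 * |s - t|) • f‖ := by
      apply lp_norm_mono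
      intro k
      have hcoe : (S s - S t) k = S s k - S t k := by
        rw [lp.coeFn_sub]; rfl
      have hcoe2 : ((C0 * |s - t|) • f) k = (C0 * |s - t|) * f k := by
        rw [lp.coeFn_smul]; rfl
      rw [hcoe, hcoe2, hS s hs01 k, hS t ht01 k]
      have : lam k ^ (-s) * f k - lam k ^ (-t) * f k
          = (lam k ^ (-s) - lam k ^ (-t)) * f k := by ring
      rw [this, Real.norm_eq_abs, Real.norm_eq_abs, abs_mul, abs_mul (C0 * |s - t|)]
      apply mul_le_mul_of_nonneg_right _ (abs_nonneg (f k))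
      calc |lam k ^ (-s) - lam k ^ (-t)| ≤ C0 * |s - t| :=
            rpow_neg_diff_bound hlam1 (hlam k) ha'pos hb'1 hsK htK
        _ ≤ abs (C0 * |s - t|) := le_abs_self _
    calc ‖S s - S t‖ ≤ ‖(C0 * |s - t|) • f‖ := key
      _ = abs (C0 * |s - t|) * ‖f‖ := by rw [norm_smul, Real.norm_eq_abs]
      _ = C0 * ‖f‖ * |s - t| := by
          rw [abs_mul, abs_of_nonneg hC0, abs_abs]; ring
  have contS : ContinuousOn S (Set.Icc a' b') := by
    have : LipschitzOnWith (C0 * ‖f‖).toNNReal S (Set.Icc a' b') := by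
      apply LipschitzOnWith.of_dist_le_mul
      intro s hs t ht
      rw [dist_eq_norm, dist_eq_norm]
      calc ‖S s - S t‖ ≤ C0 * ‖f‖ * |s - t| := Slip s hs t ht
        _ ≤ (C0 * ‖f‖).toNNReal * ‖s - t‖ := by
            rw [Real.norm_eq_abs]
            apply mul_le_mul_of_nonneg_right _ (abs_nonneg _)
            exact Real.le_coe_toNNReal _
    exact this.continuousOn
  have contF : ContinuousOn F (Set.Icc a' b') := by
    have h1 : ContinuousOn (fun s => 1 / 2 * ‖S s - ud‖ ^ 2 + φ s) (Set.Icc a' b') := by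
      apply ContinuousOn.add
      · exact continuousOn_const.mul (((contS.sub continuousOn_const).norm).pow 2)
      · exact (hφC2.continuousOn).mono hK
    exact h1.congr fun s hs => hF s (hK hs)
  obtain ⟨sbar, hsbarK, hmin⟩ :=
    isCompact_Icc.exists_isMinOn (Set.nonempty_Icc.mpr ha'b') contF
  refine ⟨sbar, hK hsbarK, fun s hsab => ?_⟩
  by_cases hsK : s ∈ Set.Icc a' b'
  · exact hmin hsK
  · have hFs0 : F sbar ≤ F s0 := hmin ⟨ha's0, hs0b'⟩
    have hφs : F s0 < φ s := by
      have h' : s < a' ∨ b' < s := by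
        rcases lt_or_ge s a' with h | h
        · exact Or.inl h
        · right; by_contra hcon; push_neg at hcon; exact hsK ⟨h, hcon⟩
      rcases h' with h | h
      · exact hufar ⟨hsab.1, by
          have : a' ≤ (a + u) / 2 := min_le_right _ _
          linarith⟩
      · exact hvfar ⟨by
          have : (b + v) / 2 ≤ b' := le_max_right _ _
          linarith, hsab.2⟩

    have hFge : φ s ≤ F s := by
      rw [hF s hsab]
      nlinarith [sq_nonneg ‖S s - ud‖]
    linarith
end

section
/- If s̄ ∈ (a,b) satisfies F(s̄) ≤ F(s) for every s ∈ (a,b), then the first-order optimality condition ⟨S(s̄) − u_d, u^{(1)}(s̄)⟩ + φ'(s̄) = 0 holds, where ⟨·,·⟩ is the inner product of H. -/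
open Real Filter
open scoped RealInnerProductSpace ENNReal Topology

lemma exp_taylor_bound (x : ℝ) : |Real.exp (-x) - 1 + x| ≤ 3 * x ^ 2 * Real.exp |x| := by
  have hex : (1:ℝ) ≤ Real.exp |x| := Real.one_le_exp (abs_nonneg x)
  rcases le_or_gt |x| 1 with h | h
  · have h1 : |Real.exp (-x) - 1 - (-x)| ≤ (-x) ^ 2 :=
      Real.abs_exp_sub_one_sub_id_le (by rwa [abs_neg])
    have h2 : Real.exp (-x) - 1 + x = Real.exp (-x) - 1 - (-x) := by ring
    rw [h2]
    nlinarith [sq_nonneg x, h1]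
  · have hx2 : (1:ℝ) ≤ x ^ 2 := by nlinarith [sq_abs x]
    have h1 : Real.exp (-x) ≤ Real.exp |x| := Real.exp_le_exp.2 (neg_le_abs x)
    have h2 : |x| + 1 ≤ Real.exp |x| := Real.add_one_le_exp |x|
    have tri : |Real.exp (-x) - 1 + x| ≤ Real.exp (-x) + (|x| + 1) := by
      have h3 : |x - 1| ≤ |x| + 1 := by
        calc |x - 1| ≤ |x| + |(1:ℝ)| := abs_sub _ _
          _ = |x| + 1 := by norm_num
      calc |Real.exp (-x) - 1 + x| = |Real.exp (-x) + (x - 1)| := by ring_nf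
        _ ≤ |Real.exp (-x)| + |x - 1| := abs_add_le _ _
        _ = Real.exp (-x) + |x - 1| := by rw [abs_of_pos (Real.exp_pos _)]
        _ ≤ Real.exp (-x) + (|x| + 1) := by linarith
    nlinarith [Real.exp_pos (-x), sq_nonneg x]

lemma D_bound (lam1 l sbar ε η : ℝ) (hlam1 : 0 < lam1) (hl : lam1 ≤ l)
    (hε0 : 0 < ε) (hη0 : 0 < η) (hexp : 2 * η + ε ≤ sbar) (hsum : sbar + ε ≤ 2) :
    (Real.log l) ^ 2 * l ^ (-sbar) * Real.exp (|Real.log l| * ε) ≤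
      max (1 / η ^ 2) ((Real.log lam1) ^ 2 * lam1 ^ (-2 : ℝ)) := by
  have hl0 : 0 < l := lt_of_lt_of_le hlam1 hl
  rcases le_or_gt 1 l with h1 | h1
  · have hL0 : 0 ≤ Real.log l := Real.log_nonneg h1
    have habs : |Real.log l| = Real.log l := abs_of_nonneg hL0
    have hEε : Real.exp (Real.log l * ε) = l ^ ε := (Real.rpow_def_of_pos hl0 ε).symm
    rw [habs, hEε]
    have hLle : Real.log l ≤ l ^ η / η := by
      have h2 : Real.log (l ^ η) ≤ l ^ η - 1 :=
        Real.log_le_sub_one_of_pos (Real.rpow_pos_of_pos hl0 η)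
      rw [Real.log_rpow hl0] at h2
      have h3 : η * Real.log l ≤ l ^ η := by nlinarith [Real.rpow_pos_of_pos hl0 η]
      calc Real.log l = (η * Real.log l) / η := by field_simp
        _ ≤ l ^ η / η := by gcongr
    have e1 : l ^ (2 * η + ε - sbar) = (l ^ η) ^ (2 : ℕ) * (l ^ (-sbar) * l ^ ε) := by
      rw [← Real.rpow_natCast (l ^ η) 2, ← Real.rpow_mul hl0.le, ← Real.rpow_add hl0,
        ← Real.rpow_add hl0]
      ring_nf
    have h2 : (Real.log l) ^ 2 ≤ (l ^ η) ^ 2 / η ^ 2 := by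
      have := pow_le_pow_left₀ hL0 hLle 2
      rwa [div_pow] at this
    have hpos : (0:ℝ) < l ^ (-sbar) * l ^ ε := by positivity
    have key : (Real.log l) ^ 2 * l ^ (-sbar) * l ^ ε ≤ 1 / η ^ 2 * l ^ (2 * η + ε - sbar) := by
      rw [e1]
      calc (Real.log l) ^ 2 * l ^ (-sbar) * l ^ ε
          = (Real.log l) ^ 2 * (l ^ (-sbar) * l ^ ε) := by ring
        _ ≤ ((l ^ η) ^ 2 / η ^ 2) * (l ^ (-sbar) * l ^ ε) :=
            mul_le_mul_of_nonneg_right h2 hpos.le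
        _ = 1 / η ^ 2 * ((l ^ η) ^ (2:ℕ) * (l ^ (-sbar) * l ^ ε)) := by ring
    have hle1 : l ^ (2 * η + ε - sbar) ≤ 1 :=
      Real.rpow_le_one_of_one_le_of_nonpos h1 (by linarith)
    have : (Real.log l) ^ 2 * l ^ (-sbar) * l ^ ε ≤ 1 / η ^ 2 := by
      calc (Real.log l) ^ 2 * l ^ (-sbar) * l ^ ε ≤ 1 / η ^ 2 * l ^ (2 * η + ε - sbar) := key
        _ ≤ 1 / η ^ 2 * 1 := mul_le_mul_of_nonneg_left hle1 (by positivity)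
        _ = 1 / η ^ 2 := by ring
    exact le_trans this (le_max_left _ _)
  · have hL0 : Real.log l ≤ 0 := Real.log_nonpos hl0.le h1.le
    have hLL : Real.log lam1 ≤ Real.log l := Real.log_le_log hlam1 hl
    have habs2 : |Real.log l| ≤ |Real.log lam1| := by
      rw [abs_of_nonpos hL0, abs_of_nonpos (by linarith)]
      linarith
    have hLsq : (Real.log l) ^ 2 ≤ (Real.log lam1) ^ 2 := by
      rw [← sq_abs (Real.log l), ← sq_abs (Real.log lam1)]
      exact pow_le_pow_left₀ (abs_nonneg _) habs2 2
    have hEε : Real.exp (|Real.log l| * ε) = l ^ (-ε) := by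
      rw [abs_of_nonpos hL0, Real.rpow_def_of_pos hl0]
      ring_nf
    rw [hEε]
    have e1 : l ^ (-sbar) * l ^ (-ε) = l ^ (-(sbar + ε)) := by
      rw [← Real.rpow_add hl0]; ring_nf
    have h2 : l ^ (-(sbar + ε)) ≤ lam1 ^ (-(sbar + ε)) :=
      Real.rpow_le_rpow_of_nonpos hlam1 hl (by linarith)
    have h3 : lam1 ^ (-(sbar + ε)) ≤ lam1 ^ (-2 : ℝ) :=
      Real.rpow_le_rpow_of_exponent_ge hlam1 (le_of_lt (lt_of_le_of_lt hl h1)) (by linarith)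
    have hfin : (Real.log l) ^ 2 * l ^ (-sbar) * l ^ (-ε) ≤
        (Real.log lam1) ^ 2 * lam1 ^ (-2 : ℝ) := by
      have hp : (0:ℝ) ≤ l ^ (-sbar) * l ^ (-ε) := by positivity
      calc (Real.log l) ^ 2 * l ^ (-sbar) * l ^ (-ε)
          = (Real.log l) ^ 2 * (l ^ (-sbar) * l ^ (-ε)) := by ring
        _ ≤ (Real.log lam1) ^ 2 * (l ^ (-sbar) * l ^ (-ε)) :=
            mul_le_mul_of_nonneg_right hLsq hp
        _ ≤ (Real.log lam1) ^ 2 * lam1 ^ (-2 : ℝ) := by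
            apply mul_le_mul_of_nonneg_left _ (sq_nonneg _)
            rw [e1]; exact h2.trans h3
    exact hfin.trans (le_max_right _ _)

/-- First-order necessary optimality condition: if `s̄ ∈ (a,b)` minimizes the reduced cost
functional `F(s) = ½‖S(s) − u_d‖² + φ(s)` over `(a,b)`, then
`⟨S(s̄) − u_d, u¹(s̄)⟩ + φ'(s̄) = 0`. -/
theorem first_order_optimality (lam1 : ℝ) (hlam1 : 0 < lam1) (lam : ℕ → ℝ)
    (hlam : ∀ k, lam1 ≤ lam k) (f : lp (fun _ : ℕ => ℝ) 2)
    (S : ℝ → lp (fun _ : ℕ => ℝ) 2)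
    (hS : ∀ s ∈ Set.Ioo (0 : ℝ) 1, ∀ k, S s k = lam k ^ (-s) * f k)
    (u1 : ℝ → lp (fun _ : ℕ => ℝ) 2)
    (hu1 : ∀ s ∈ Set.Ioo (0 : ℝ) 1, ∀ k,
      u1 s k = -(Real.log (lam k)) * lam k ^ (-s) * f k)
    (ud : lp (fun _ : ℕ => ℝ) 2) (a b : ℝ) (ha : 0 ≤ a) (hab : a < b) (hb : b ≤ 1)
    (φ φ' : ℝ → ℝ) (hφ0 : ∀ s ∈ Set.Ioo a b, 0 ≤ φ s)
    (hφconv : ConvexOn ℝ (Set.Ioo a b) φ)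
    (hφd : ∀ s ∈ Set.Ioo a b, HasDerivAt φ (φ' s) s)
    (hφa : Tendsto φ (nhdsWithin a (Set.Ioi a)) atTop)
    (hφb : Tendsto φ (nhdsWithin b (Set.Iio b)) atTop)
    (F : ℝ → ℝ) (hF : ∀ s ∈ Set.Ioo a b, F s = 1 / 2 * ‖S s - ud‖ ^ 2 + φ s)
    (sbar : ℝ) (hsbar : sbar ∈ Set.Ioo a b)
    (hmin : ∀ s ∈ Set.Ioo a b, F sbar ≤ F s) :
    ⟪S sbar - ud, u1 sbar⟫ + φ' sbar = 0 := by
  obtain ⟨hsa, hsb⟩ := hsbar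
  have hs0 : 0 < sbar := lt_of_le_of_lt ha hsa
  have hs1 : sbar < 1 := lt_of_lt_of_le hsb hb
  have hs01 : sbar ∈ Set.Ioo (0:ℝ) 1 := ⟨hs0, hs1⟩
  set ε : ℝ := min (sbar / 4) ((1 - sbar) / 2) with hεdef
  have hε0 : 0 < ε := lt_min (by linarith) (by linarith)
  have hεa : ε ≤ sbar / 4 := min_le_left _ _
  have hεb : ε ≤ (1 - sbar) / 2 := min_le_right _ _
  set η : ℝ := sbar / 8 with hηdef
  have hη0 : 0 < η := by positivity
  set M : ℝ := max (1 / η ^ 2) ((Real.log lam1) ^ 2 * lam1 ^ (-2 : ℝ)) with hMdef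
  have hM0 : 0 ≤ M := le_trans (by positivity) (le_max_left _ _)
  set K : ℝ := 3 * M with hKdef
  have hK0 : 0 ≤ K := by linarith
  -- coordinatewise estimate
  have coord : ∀ s : ℝ, |s - sbar| ≤ ε → ∀ k : ℕ,
      |(S s - S sbar - (s - sbar) • u1 sbar) k| ≤ K * (s - sbar) ^ 2 * |f k| := by
    intro s hs k
    have habs := abs_le.1 hs
    have hsI : s ∈ Set.Ioo (0:ℝ) 1 := ⟨by linarith, by linarith⟩
    set l : ℝ := lam k with hldef
    have hl0 : 0 < l := lt_of_lt_of_le hlam1 (hlam k)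
    set L : ℝ := Real.log l with hLdef
    set t : ℝ := s - sbar with htdef
    have happ : (S s - S sbar - (s - sbar) • u1 sbar) k
        = S s k - S sbar k - (s - sbar) * u1 sbar k := by
      simp [lp.coeFn_sub, lp.coeFn_smul]; rfl
    rw [happ, hS s hsI k, hS sbar hs01 k, hu1 sbar hs01 k]
    have hrw : l ^ (-s) = l ^ (-sbar) * Real.exp (-(L * t)) := by
      rw [Real.rpow_def_of_pos hl0, Real.rpow_def_of_pos hl0, ← Real.exp_add]
      congr 1
      rw [hLdef, htdef]; ring
    have hexpr : l ^ (-s) * f k - l ^ (-sbar) * f k - (s - sbar) * (-L * l ^ (-sbar) * f k)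
        = (l ^ (-sbar) * (Real.exp (-(L * t)) - 1 + L * t)) * f k := by
      rw [hrw, htdef]; ring
    rw [hexpr]
    have hP : (0:ℝ) < l ^ (-sbar) := Real.rpow_pos_of_pos hl0 _
    rw [abs_mul, abs_mul, abs_of_pos hP]
    have h1 : |Real.exp (-(L * t)) - 1 + L * t| ≤ 3 * (L * t) ^ 2 * Real.exp |L * t| :=
      exp_taylor_bound (L * t)
    have h2 : Real.exp |L * t| ≤ Real.exp (|L| * ε) := by
      apply Real.exp_le_exp.2
      rw [abs_mul]
      exact mul_le_mul_of_nonneg_left hs (abs_nonneg L)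
    have h3 : L ^ 2 * l ^ (-sbar) * Real.exp (|L| * ε) ≤ M :=
      D_bound lam1 l sbar ε η hlam1 (hlam k) hε0 hη0 (by rw [hηdef]; linarith)
        (by linarith)
    calc l ^ (-sbar) * |Real.exp (-(L * t)) - 1 + L * t| * |f k|
        ≤ l ^ (-sbar) * (3 * (L * t) ^ 2 * Real.exp |L * t|) * |f k| := by gcongr
      _ ≤ l ^ (-sbar) * (3 * (L * t) ^ 2 * Real.exp (|L| * ε)) * |f k| := by gcongr
      _ = 3 * t ^ 2 * (L ^ 2 * l ^ (-sbar) * Real.exp (|L| * ε)) * |f k| := by ring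
      _ ≤ 3 * t ^ 2 * M * |f k| := by
          have ht2 : (0:ℝ) ≤ 3 * t ^ 2 := by positivity
          gcongr
      _ = K * t ^ 2 * |f k| := by rw [hKdef]; ring
  -- norm estimate
  have key : ∀ s : ℝ, |s - sbar| ≤ ε →
      ‖S s - S sbar - (s - sbar) • u1 sbar‖ ≤ K * (s - sbar) ^ 2 * ‖f‖ := by
    intro s hs
    set g := S s - S sbar - (s - sbar) • u1 sbar with hgdef
    set c : ℝ := K * (s - sbar) ^ 2 with hcdef
    have hc0 : 0 ≤ c := mul_nonneg hK0 (sq_nonneg _)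
    have hC0 : 0 ≤ c * ‖f‖ := mul_nonneg hc0 (norm_nonneg _)
    have h2p : (0:ℝ) < (2 : ℝ≥0∞).toReal := by norm_num
    refine lp.norm_le_of_forall_sum_le h2p hC0 fun A => ?_
    have hconv : ∀ x : ℝ, 0 ≤ x → x ^ (2 : ℝ≥0∞).toReal = x ^ (2:ℕ) := by
      intro x hx
      rw [show (2 : ℝ≥0∞).toReal = ((2:ℕ):ℝ) by norm_num, Real.rpow_natCast]
    have hsum1 : ∑ i ∈ A, ‖g i‖ ^ (2 : ℝ≥0∞).toReal
        ≤ c ^ 2 * ∑ i ∈ A, ‖f i‖ ^ (2 : ℝ≥0∞).toReal := by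
      rw [Finset.mul_sum]
      apply Finset.sum_le_sum
      intro i _
      rw [hconv _ (norm_nonneg _), hconv _ (norm_nonneg _)]
      have hb1 : ‖g i‖ ≤ c * ‖f i‖ := by
        rw [Real.norm_eq_abs, Real.norm_eq_abs, hcdef]
        exact coord s hs i
      calc ‖g i‖ ^ (2:ℕ) ≤ (c * ‖f i‖) ^ (2:ℕ) :=
            pow_le_pow_left₀ (norm_nonneg _) hb1 2
        _ = c ^ 2 * ‖f i‖ ^ (2:ℕ) := by ring
    have hsum2 : ∑ i ∈ A, ‖f i‖ ^ (2 : ℝ≥0∞).toReal ≤ ‖f‖ ^ (2 : ℝ≥0∞).toReal :=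
      lp.sum_rpow_le_norm_rpow h2p f A
    calc ∑ i ∈ A, ‖g i‖ ^ (2 : ℝ≥0∞).toReal
        ≤ c ^ 2 * ∑ i ∈ A, ‖f i‖ ^ (2 : ℝ≥0∞).toReal := hsum1
      _ ≤ c ^ 2 * ‖f‖ ^ (2 : ℝ≥0∞).toReal := by
          apply mul_le_mul_of_nonneg_left hsum2 (sq_nonneg _)
      _ = (c * ‖f‖) ^ (2 : ℝ≥0∞).toReal := by
          rw [hconv _ (norm_nonneg _), hconv _ hC0]
          ring
  -- derivative of S
  have hSder : HasDerivAt S (u1 sbar) sbar := by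
    rw [hasDerivAt_iff_isLittleO]
    have big : (fun s => S s - S sbar - (s - sbar) • u1 sbar)
        =O[𝓝 sbar] fun s => (s - sbar) ^ 2 := by
      rw [Asymptotics.isBigO_iff]
      refine ⟨K * ‖f‖, ?_⟩
      filter_upwards [Metric.closedBall_mem_nhds sbar hε0] with s hsmem
      have hd : |s - sbar| ≤ ε := by
        rwa [Metric.mem_closedBall, Real.dist_eq] at hsmem
      have := key s hd
      rw [Real.norm_eq_abs, abs_of_nonneg (sq_nonneg (s - sbar))]
      calc ‖S s - S sbar - (s - sbar) • u1 sbar‖ ≤ K * (s - sbar) ^ 2 * ‖f‖ := this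
        _ = K * ‖f‖ * (s - sbar) ^ 2 := by ring
    have lo : (fun s : ℝ => (s - sbar) ^ 2) =o[𝓝 sbar] fun s => s - sbar := by
      have h1 : Tendsto (fun s : ℝ => s - sbar) (𝓝 sbar) (𝓝 0) := by
        exact tendsto_sub_nhds_zero_iff.2 tendsto_id
      have h2 := (Asymptotics.isLittleO_one_iff ℝ).2 h1
      have h3 := h2.mul_isBigO (Asymptotics.isBigO_refl (fun s : ℝ => s - sbar) (𝓝 sbar))
      simpa [pow_two] using h3
    exact big.trans_isLittleO lo
  -- derivative of the cost
  have hsub : HasDerivAt (fun s => S s - ud) (u1 sbar) sbar := hSder.sub_const ud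
  have hinner := (hsub.inner ℝ hsub).const_mul (1/2 : ℝ)
  have hg : HasDerivAt (fun s => 1 / 2 * ‖S s - ud‖ ^ 2 + φ s)
      (⟪S sbar - ud, u1 sbar⟫ + φ' sbar) sbar := by
    have h4 := hinner.add (hφd sbar ⟨hsa, hsb⟩)
    have heq : (fun s => 1/2 * ⟪S s - ud, S s - ud⟫ + φ s)
        = fun s => 1 / 2 * ‖S s - ud‖ ^ 2 + φ s := by
      funext s; rw [real_inner_self_eq_norm_sq]
    have hval : 1/2 * (⟪S sbar - ud, u1 sbar⟫ + ⟪u1 sbar, S sbar - ud⟫) + φ' sbar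
        = ⟪S sbar - ud, u1 sbar⟫ + φ' sbar := by
      rw [real_inner_comm (u1 sbar)]; ring
    rw [← heq, ← hval]
    exact h4
  have hFeq : F =ᶠ[𝓝 sbar] fun s => 1 / 2 * ‖S s - ud‖ ^ 2 + φ s := by
    filter_upwards [isOpen_Ioo.mem_nhds ⟨hsa, hsb⟩] with s hsmem using hF s hsmem
  have hFd : HasDerivAt F (⟪S sbar - ud, u1 sbar⟫ + φ' sbar) sbar :=
    hg.congr_of_eventuallyEq hFeq
  have hloc : IsLocalMin F sbar := by
    filter_upwards [isOpen_Ioo.mem_nhds ⟨hsa, hsb⟩] with s hsmem using hmin s hsmem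
  exact hloc.hasDerivAt_eq_zero hFd
end

section
/- If s̄ ∈ (a,b) satisfies the first-order condition ⟨S(s̄) − u_d, u^{(1)}(s̄)⟩ + φ'(s̄) = 0 together with the second-order condition ‖u^{(1)}(s̄)‖² + ⟨S(s̄) − u_d, u^{(2)}(s̄)⟩ + φ''(s̄) > 0, then s̄ is a strict local minimizer of F: there exists δ > 0 such that F(s̄) < F(s) for every s ∈ (a,b) with 0 < |s − s̄| < δ. -/
open Real Filter
open scoped RealInnerProductSpace
open scoped ENNReal

section helpers
open Set Asymptotics

private lemma lpnorm_le_aux (x y : lp (fun _ : ℕ => ℝ) 2) (M : ℝ) (hM : 0 ≤ M)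
    (h : ∀ k, |x k| ≤ M * |y k|) : ‖x‖ ≤ M * ‖y‖ := by
  have hp : (0:ℝ) < (2 : ℝ≥0∞).toReal := by norm_num
  have hx := lp.norm_rpow_eq_tsum hp x
  have hy := lp.norm_rpow_eq_tsum hp y
  have htr : (2 : ℝ≥0∞).toReal = (2:ℝ) := by norm_num
  rw [htr] at hx hy
  have hsx : Summable (fun k => ‖x k‖ ^ (2:ℝ)) := by
    have := lp.memℓp x
    rw [memℓp_gen_iff hp] at this
    simpa using this
  have hsy : Summable (fun k => ‖y k‖ ^ (2:ℝ)) := by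
    have := lp.memℓp y
    rw [memℓp_gen_iff hp] at this
    simpa using this
  have key : ‖x‖ ^ (2:ℝ) ≤ (M * ‖y‖) ^ (2:ℝ) := by
    rw [hx, mul_rpow hM (norm_nonneg _), hy, ← tsum_mul_left]
    refine Summable.tsum_le_tsum (fun k => ?_) hsx (hsy.mul_left _)
    rw [← mul_rpow hM (norm_nonneg _)]
    refine Real.rpow_le_rpow (norm_nonneg _) ?_ (by norm_num)
    simpa [Real.norm_eq_abs] using h k
  have h2 : ‖x‖ ^ (2:ℕ) ≤ (M * ‖y‖) ^ (2:ℕ) := by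
    rw [← Real.rpow_natCast, ← Real.rpow_natCast (M * ‖y‖)]
    exact_mod_cast key
  exact (pow_le_pow_iff_left₀ (norm_nonneg x) (by positivity) two_ne_zero).mp h2

private lemma taylor_bound_aux (g g' g'' : ℝ → ℝ) (c d C : ℝ)
    (hg : ∀ τ ∈ Icc c d, HasDerivAt g (g' τ) τ)
    (hg' : ∀ τ ∈ Icc c d, HasDerivAt g' (g'' τ) τ)
    (hC : ∀ τ ∈ Icc c d, |g'' τ| ≤ C)
    (s t : ℝ) (hs : s ∈ Icc c d) (ht : t ∈ Icc c d) :
    |g t - g s - (t - s) * g' s| ≤ C * (t - s) ^ 2 := by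
  have hC0 : 0 ≤ C := le_trans (abs_nonneg _) (hC s hs)
  have hlip : ∀ τ ∈ Icc c d, |g' τ - g' s| ≤ C * |τ - s| := by
    intro τ hτ
    have := Convex.norm_image_sub_le_of_norm_hasDerivWithin_le
      (f := g') (f' := g'') (s := Icc c d) (C := C)
      (fun x hx => (hg' x hx).hasDerivWithinAt)
      (fun x hx => by simpa [Real.norm_eq_abs] using hC x hx)
      (convex_Icc c d) hs hτ
    simpa [Real.norm_eq_abs] using this
  set h : ℝ → ℝ := fun τ => g τ - g s - (τ - s) * g' s with hh
  have hsub : uIcc s t ⊆ Icc c d := uIcc_subset_Icc hs ht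
  have hd : ∀ τ ∈ uIcc s t, HasDerivWithinAt h (g' τ - g' s) (uIcc s t) τ := by
    intro τ hτ
    have h0 : HasDerivAt (fun τ => (τ - s) * g' s) ((1 - 0) * g' s) τ :=
      ((hasDerivAt_id τ).sub (hasDerivAt_const _ _)).mul_const (g' s)
    have : HasDerivAt h (g' τ - 0 - (1 - 0) * g' s) τ :=
      ((hg τ (hsub hτ)).sub (hasDerivAt_const _ _)).sub h0
    simpa using this.hasDerivWithinAt
  have hbd : ∀ τ ∈ uIcc s t, ‖g' τ - g' s‖ ≤ C * |t - s| := by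
    intro τ hτ
    have h1 : |g' τ - g' s| ≤ C * |τ - s| := hlip τ (hsub hτ)
    have h2 : |τ - s| ≤ |t - s| := abs_sub_left_of_mem_uIcc hτ
    exact le_trans (by simpa [Real.norm_eq_abs] using h1)
      (mul_le_mul_of_nonneg_left h2 hC0)
  have := Convex.norm_image_sub_le_of_norm_hasDerivWithin_le hd hbd
    (convex_uIcc s t) (left_mem_uIcc) (right_mem_uIcc)
  have hhs : h s = 0 := by simp [hh]
  have hht : ‖h t - h s‖ = |g t - g s - (t - s) * g' s| := by
    simp [hh, Real.norm_eq_abs]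
  calc |g t - g s - (t - s) * g' s| ≤ C * |t - s| * ‖t - s‖ := by rw [← hht]; exact this
    _ = C * (t - s) ^ 2 := by
        rw [Real.norm_eq_abs, mul_assoc, ← abs_mul, ← sq, abs_of_nonneg (sq_nonneg _)]

private lemma hasDerivAt_lp_aux (V : ℝ → lp (fun _ : ℕ => ℝ) 2) (W : lp (fun _ : ℕ => ℝ) 2)
    (y : lp (fun _ : ℕ => ℝ) 2) (c d C : ℝ) (hC : 0 ≤ C) (s₀ : ℝ) (hs₀ : s₀ ∈ Ioo c d)
    (hbound : ∀ t ∈ Icc c d, ∀ k,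
      |V t k - V s₀ k - (t - s₀) * W k| ≤ C * (t - s₀) ^ 2 * |y k|) :
    HasDerivAt V W s₀ := by
  rw [hasDerivAt_iff_isLittleO]
  have hO : (fun t => V t - V s₀ - (t - s₀) • W) =O[nhds s₀] (fun t => (t - s₀) ^ 2) := by
    refine IsBigO.of_bound (C * ‖y‖) ?_
    filter_upwards [Ioo_mem_nhds hs₀.1 hs₀.2] with t ht
    have hc : ∀ k, |(V t - V s₀ - (t - s₀) • W) k| ≤ (C * (t - s₀) ^ 2) * |y k| := by
      intro k
      have : (V t - V s₀ - (t - s₀) • W) k = V t k - V s₀ k - (t - s₀) * W k := by rfl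
      rw [this]
      simpa [mul_assoc] using hbound t (Ioo_subset_Icc_self ht) k
    have := lpnorm_le_aux _ y _ (by positivity) hc
    calc ‖V t - V s₀ - (t - s₀) • W‖ ≤ C * (t - s₀) ^ 2 * ‖y‖ := this
      _ ≤ C * ‖y‖ * ‖(t - s₀) ^ 2‖ := by
          rw [Real.norm_eq_abs, abs_of_nonneg (sq_nonneg _)]; ring_nf; exact le_refl _
  have ho : (fun t : ℝ => (t - s₀) ^ 2) =o[nhds s₀] (fun t => t - s₀) := by
    have h1 : (fun t : ℝ => t - s₀) =o[nhds s₀] (fun _ => (1:ℝ)) := by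
      rw [isLittleO_one_iff]
      have : Tendsto (fun t : ℝ => t - s₀) (nhds s₀) (nhds (s₀ - s₀)) :=
        (continuous_id.sub continuous_const).tendsto s₀
      simpa using this
    have h2 : (fun t : ℝ => t - s₀) =O[nhds s₀] (fun t => t - s₀) := isBigO_refl _ _
    simpa [pow_two] using h1.mul_isBigO h2
  exact hO.trans_isLittleO ho |>.congr_left (fun t => by simp)

private lemma exp_bound_aux (lam1 : ℝ) (h1 : 0 < lam1) (lam : ℝ) (hlam : lam1 ≤ lam)
    (c : ℝ) (hc : 0 < c) (m : ℕ) (τ : ℝ) (hτc : c ≤ τ) (hτ1 : τ ≤ 1) :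
    |Real.log lam| ^ m * Real.exp (-(τ * Real.log lam)) ≤
      (m.factorial : ℝ) / c ^ m + |Real.log lam1| ^ m * (1 + lam1⁻¹) := by
  set L := Real.log lam with hL
  have hlam0 : (0:ℝ) < lam := lt_of_lt_of_le h1 hlam
  rcases le_or_gt 0 L with hL0 | hL0
  · have habs : |L| = L := abs_of_nonneg hL0
    have h2 : Real.exp (-(τ * L)) ≤ Real.exp (-(c * L)) := by
      apply Real.exp_le_exp.mpr
      nlinarith
    have h3 : |L| ^ m * Real.exp (-(τ * L)) ≤ L ^ m * Real.exp (-(c * L)) := by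
      rw [habs]
      exact mul_le_mul_of_nonneg_left h2 (by positivity)
    have h4 : L ^ m * Real.exp (-(c * L)) ≤ (m.factorial : ℝ) / c ^ m := by
      have h5 : (c * L) ^ m / (m.factorial : ℝ) ≤ Real.exp (c * L) :=
        Real.pow_div_factorial_le_exp (c * L) (mul_nonneg hc.le hL0) m
      have hfp : (0:ℝ) < (m.factorial : ℝ) := by positivity
      have hep : (0:ℝ) < Real.exp (c * L) := Real.exp_pos _
      have hcp : (0:ℝ) < c ^ m := by positivity
      have h6 : L ^ m * c ^ m ≤ (m.factorial : ℝ) * Real.exp (c * L) := by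
        rw [div_le_iff₀ hfp] at h5
        calc L ^ m * c ^ m = (c * L) ^ m := by rw [mul_pow]; ring
          _ ≤ Real.exp (c * L) * (m.factorial : ℝ) := h5
          _ = (m.factorial : ℝ) * Real.exp (c * L) := by ring
      rw [Real.exp_neg, le_div_iff₀ hcp]
      calc L ^ m * (Real.exp (c*L))⁻¹ * c ^ m = (L ^ m * c ^ m) * (Real.exp (c*L))⁻¹ := by ring
        _ ≤ ((m.factorial : ℝ) * Real.exp (c*L)) * (Real.exp (c*L))⁻¹ :=
            mul_le_mul_of_nonneg_right h6 (by positivity)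
        _ = (m.factorial : ℝ) := by field_simp
    have hnn : (0:ℝ) ≤ |Real.log lam1| ^ m * (1 + lam1⁻¹) := by positivity
    linarith
  · have hlam1lt : lam < 1 := by
      by_contra h
      push_neg at h
      exact absurd (Real.log_nonneg h) (by linarith)
    have hL1 : Real.log lam1 ≤ L := Real.log_le_log h1 hlam
    have hL1neg : Real.log lam1 < 0 := lt_of_le_of_lt hL1 hL0
    have habs1 : |Real.log lam1| = -Real.log lam1 := abs_of_neg hL1neg
    have habsL : |L| ≤ |Real.log lam1| := by
      rw [habs1, abs_of_neg hL0]; linarith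
    have hexp : Real.exp (-(τ * L)) ≤ lam1⁻¹ := by
      have h7 : -(τ * L) ≤ -Real.log lam1 := by nlinarith
      calc Real.exp (-(τ * L)) ≤ Real.exp (-Real.log lam1) := Real.exp_le_exp.mpr h7
        _ = lam1⁻¹ := by rw [Real.exp_neg, Real.exp_log h1]
    have h8 : |L| ^ m * Real.exp (-(τ * L)) ≤ |Real.log lam1| ^ m * lam1⁻¹ := by
      apply mul_le_mul (pow_le_pow_left₀ (abs_nonneg _) habsL m) hexp (Real.exp_pos _).le
        (by positivity)
    have h9 : |Real.log lam1| ^ m * lam1⁻¹ ≤ |Real.log lam1| ^ m * (1 + lam1⁻¹) :=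
      mul_le_mul_of_nonneg_left (by linarith) (by positivity)
    have : (0:ℝ) ≤ (m.factorial : ℝ) / c ^ m := by positivity
    linarith

private lemma hasDerivAt_exp_mul_aux (L A τ : ℝ) :
    HasDerivAt (fun τ : ℝ => A * Real.exp (-(τ * L))) (A * -L * Real.exp (-(τ * L))) τ := by
  have h1 : HasDerivAt (fun τ : ℝ => -(τ * L)) (-(1 * L)) τ :=
    ((hasDerivAt_id τ).mul_const L).neg
  have h2 := h1.exp
  have h3 := h2.const_mul A
  exact h3.congr_deriv (by ring)

end helpers

/-- Second-order sufficient optimality condition: if `s̄ ∈ (a,b)` satisfies the first-order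
condition `⟨S(s̄) − u_d, u¹(s̄)⟩ + φ'(s̄) = 0` and the second-order condition
`‖u¹(s̄)‖² + ⟨S(s̄) − u_d, u²(s̄)⟩ + φ''(s̄) > 0`, then `s̄` is a strict local minimizer of the
reduced cost functional `F`. -/
theorem second_order_sufficient (lam1 : ℝ) (hlam1 : 0 < lam1) (lam : ℕ → ℝ)
    (hlam : ∀ k, lam1 ≤ lam k) (f : lp (fun _ : ℕ => ℝ) 2)
    (S : ℝ → lp (fun _ : ℕ => ℝ) 2)
    (hS : ∀ s ∈ Set.Ioo (0 : ℝ) 1, ∀ k, S s k = lam k ^ (-s) * f k)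
    (u1 u2 : ℝ → lp (fun _ : ℕ => ℝ) 2)
    (hu1 : ∀ s ∈ Set.Ioo (0 : ℝ) 1, ∀ k,
      u1 s k = -(Real.log (lam k)) * lam k ^ (-s) * f k)
    (hu2 : ∀ s ∈ Set.Ioo (0 : ℝ) 1, ∀ k,
      u2 s k = (Real.log (lam k)) ^ 2 * lam k ^ (-s) * f k)
    (ud : lp (fun _ : ℕ => ℝ) 2) (a b : ℝ) (ha : 0 ≤ a) (hab : a < b) (hb : b ≤ 1)
    (φ φ' φ'' : ℝ → ℝ) (hφ0 : ∀ s ∈ Set.Ioo a b, 0 ≤ φ s)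
    (hφconv : ConvexOn ℝ (Set.Ioo a b) φ)
    (hφd : ∀ s ∈ Set.Ioo a b, HasDerivAt φ (φ' s) s)
    (hφdd : ∀ s ∈ Set.Ioo a b, HasDerivAt φ' (φ'' s) s)
    (hφddc : ContinuousOn φ'' (Set.Ioo a b))
    (hφa : Tendsto φ (nhdsWithin a (Set.Ioi a)) atTop)
    (hφb : Tendsto φ (nhdsWithin b (Set.Iio b)) atTop)
    (F : ℝ → ℝ) (hF : ∀ s ∈ Set.Ioo a b, F s = 1 / 2 * ‖S s - ud‖ ^ 2 + φ s)
    (sbar : ℝ) (hsbar : sbar ∈ Set.Ioo a b)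
    (hfirst : ⟪S sbar - ud, u1 sbar⟫ + φ' sbar = 0)
    (hsecond : 0 < ‖u1 sbar‖ ^ 2 + ⟪S sbar - ud, u2 sbar⟫ + φ'' sbar) :
    ∃ δ > 0, ∀ s ∈ Set.Ioo a b, s ≠ sbar → |s - sbar| < δ → F sbar < F s := by
  obtain ⟨hsa, hsb⟩ := hsbar
  have hlamk : ∀ k, (0:ℝ) < lam k := fun k => lt_of_lt_of_le hlam1 (hlam k)
  set ε : ℝ := min (sbar - a) (b - sbar) / 2 with hεdef
  have hsa' : 0 < sbar - a := sub_pos.mpr hsa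
  have hsb' : 0 < b - sbar := sub_pos.mpr hsb
  have hε0 : 0 < ε := div_pos (lt_min hsa' hsb') two_pos
  have hmin1 : min (sbar - a) (b - sbar) ≤ sbar - a := min_le_left _ _
  have hmin2 : min (sbar - a) (b - sbar) ≤ b - sbar := min_le_right _ _
  set c : ℝ := sbar - ε with hcdef
  set d : ℝ := sbar + ε with hddef
  have hac : a < c := by rw [hcdef, hεdef]; linarith
  have hdb : d < b := by rw [hddef, hεdef]; linarith
  have hc0 : 0 < c := lt_of_le_of_lt ha hac
  have hd1 : d < 1 := lt_of_lt_of_le hdb hb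
  have hcs : c < sbar := by rw [hcdef]; linarith
  have hsd : sbar < d := by rw [hddef]; linarith
  have hIccab : Set.Icc c d ⊆ Set.Ioo a b := fun t ht =>
    ⟨lt_of_lt_of_le hac ht.1, lt_of_le_of_lt ht.2 hdb⟩
  have hab01 : Set.Ioo a b ⊆ Set.Ioo (0:ℝ) 1 := fun t ht =>
    ⟨lt_of_le_of_lt ha ht.1, lt_of_lt_of_le ht.2 hb⟩
  have hrw : ∀ (s : ℝ) (k : ℕ), lam k ^ (-s) = Real.exp (-(s * Real.log (lam k))) := by
    intro s k
    rw [Real.rpow_def_of_pos (hlamk k)]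
    congr 1; ring
  set B2 : ℝ := (Nat.factorial 2 : ℝ) / c ^ 2 + |Real.log lam1| ^ 2 * (1 + lam1⁻¹) with hB2
  set B3 : ℝ := (Nat.factorial 3 : ℝ) / c ^ 3 + |Real.log lam1| ^ 3 * (1 + lam1⁻¹) with hB3
  have hB20 : 0 ≤ B2 := by rw [hB2]; positivity
  have hB30 : 0 ≤ B3 := by rw [hB3]; positivity
  -- coordinatewise Taylor bound for S around any point of [c,d]
  have hbound2 : ∀ s₀ ∈ Set.Icc c d, ∀ t ∈ Set.Icc c d, ∀ k,
      |S t k - S s₀ k - (t - s₀) * u1 s₀ k| ≤ B2 * (t - s₀) ^ 2 * |f k| := by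
    intro s₀ hs₀ t ht k
    set L := Real.log (lam k) with hLdef
    have hg : ∀ τ ∈ Set.Icc c d, HasDerivAt (fun τ => (f k : ℝ) * Real.exp (-(τ * L)))
        ((f k * -L) * Real.exp (-(τ * L))) τ := fun τ _ => hasDerivAt_exp_mul_aux L (f k) τ
    have hg' : ∀ τ ∈ Set.Icc c d, HasDerivAt (fun τ => (f k * -L) * Real.exp (-(τ * L)))
        ((f k * -L * -L) * Real.exp (-(τ * L))) τ := fun τ _ => hasDerivAt_exp_mul_aux L _ τ
    have hCb : ∀ τ ∈ Set.Icc c d, |(f k * -L * -L) * Real.exp (-(τ * L))| ≤ B2 * |f k| := by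
      intro τ hτ
      have he := exp_bound_aux lam1 hlam1 (lam k) (hlam k) c hc0 2 τ hτ.1 (le_trans hτ.2 hd1.le)
      have hepos : 0 < Real.exp (-(τ * L)) := Real.exp_pos _
      have habs : |(f k * -L * -L) * Real.exp (-(τ * L))|
          = |f k| * (|L| ^ 2 * Real.exp (-(τ * L))) := by
        simp only [abs_mul, abs_neg, abs_of_pos hepos]; ring
      rw [habs]
      calc |f k| * (|L| ^ 2 * Real.exp (-(τ * L))) ≤ |f k| * B2 :=
            mul_le_mul_of_nonneg_left (by rw [hB2]; exact he) (abs_nonneg _)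
        _ = B2 * |f k| := mul_comm _ _
    have key := taylor_bound_aux (fun τ => (f k : ℝ) * Real.exp (-(τ * L)))
        (fun τ => (f k * -L) * Real.exp (-(τ * L)))
        (fun τ => (f k * -L * -L) * Real.exp (-(τ * L))) c d (B2 * |f k|)
        hg hg' hCb s₀ t hs₀ ht
    have e1 : S t k = f k * Real.exp (-(t * L)) := by
      rw [hS t (hab01 (hIccab ht)) k, hrw]; ring
    have e2 : S s₀ k = f k * Real.exp (-(s₀ * L)) := by
      rw [hS s₀ (hab01 (hIccab hs₀)) k, hrw]; ring
    have e3 : u1 s₀ k = (f k * -L) * Real.exp (-(s₀ * L)) := by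
      rw [hu1 s₀ (hab01 (hIccab hs₀)) k, hrw]; ring
    rw [e1, e2, e3, show B2 * (t - s₀) ^ 2 * |f k| = (B2 * |f k|) * (t - s₀) ^ 2 from by ring]
    exact key
  -- coordinatewise Taylor bound for u1 around any point of [c,d]
  have hbound3 : ∀ s₀ ∈ Set.Icc c d, ∀ t ∈ Set.Icc c d, ∀ k,
      |u1 t k - u1 s₀ k - (t - s₀) * u2 s₀ k| ≤ B3 * (t - s₀) ^ 2 * |f k| := by
    intro s₀ hs₀ t ht k
    set L := Real.log (lam k) with hLdef
    have hg : ∀ τ ∈ Set.Icc c d, HasDerivAt (fun τ => (f k * -L) * Real.exp (-(τ * L)))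
        ((f k * -L * -L) * Real.exp (-(τ * L))) τ := fun τ _ => hasDerivAt_exp_mul_aux L _ τ
    have hg' : ∀ τ ∈ Set.Icc c d, HasDerivAt (fun τ => (f k * -L * -L) * Real.exp (-(τ * L)))
        ((f k * -L * -L * -L) * Real.exp (-(τ * L))) τ := fun τ _ => hasDerivAt_exp_mul_aux L _ τ
    have hCb : ∀ τ ∈ Set.Icc c d, |(f k * -L * -L * -L) * Real.exp (-(τ * L))| ≤ B3 * |f k| := by
      intro τ hτ
      have he := exp_bound_aux lam1 hlam1 (lam k) (hlam k) c hc0 3 τ hτ.1 (le_trans hτ.2 hd1.le)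
      have hepos : 0 < Real.exp (-(τ * L)) := Real.exp_pos _
      have habs : |(f k * -L * -L * -L) * Real.exp (-(τ * L))|
          = |f k| * (|L| ^ 3 * Real.exp (-(τ * L))) := by
        simp only [abs_mul, abs_neg, abs_of_pos hepos]; ring
      rw [habs]
      calc |f k| * (|L| ^ 3 * Real.exp (-(τ * L))) ≤ |f k| * B3 :=
            mul_le_mul_of_nonneg_left (by rw [hB3]; exact he) (abs_nonneg _)
        _ = B3 * |f k| := mul_comm _ _
    have key := taylor_bound_aux (fun τ => (f k * -L) * Real.exp (-(τ * L)))
        (fun τ => (f k * -L * -L) * Real.exp (-(τ * L)))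
        (fun τ => (f k * -L * -L * -L) * Real.exp (-(τ * L))) c d (B3 * |f k|)
        hg hg' hCb s₀ t hs₀ ht
    have e1 : u1 t k = (f k * -L) * Real.exp (-(t * L)) := by
      rw [hu1 t (hab01 (hIccab ht)) k, hrw]; ring
    have e2 : u1 s₀ k = (f k * -L) * Real.exp (-(s₀ * L)) := by
      rw [hu1 s₀ (hab01 (hIccab hs₀)) k, hrw]; ring
    have e3 : u2 s₀ k = (f k * -L * -L) * Real.exp (-(s₀ * L)) := by
      rw [hu2 s₀ (hab01 (hIccab hs₀)) k, hrw]; ring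
    rw [e1, e2, e3, show B3 * (t - s₀) ^ 2 * |f k| = (B3 * |f k|) * (t - s₀) ^ 2 from by ring]
    exact key
  -- differentiability of S and u1
  have hSder : ∀ s ∈ Set.Ioo c d, HasDerivAt S (u1 s) s := fun s hs =>
    hasDerivAt_lp_aux S (u1 s) f c d B2 hB20 s hs
      (fun t ht k => hbound2 s (Set.Ioo_subset_Icc_self hs) t ht k)
  have hu1der : HasDerivAt u1 (u2 sbar) sbar :=
    hasDerivAt_lp_aux u1 (u2 sbar) f c d B3 hB30 sbar ⟨hcs, hsd⟩
      (fun t ht k => hbound3 sbar (Set.Ioo_subset_Icc_self ⟨hcs, hsd⟩) t ht k)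
  -- the derivative of F
  set G : ℝ → ℝ := fun s => ⟪S s - ud, u1 s⟫ + φ' s with hGdef
  have hFder : ∀ s ∈ Set.Ioo c d, HasDerivAt F (G s) s := by
    intro s hs
    have hsab : s ∈ Set.Ioo a b := hIccab (Set.Ioo_subset_Icc_self hs)
    have hsub' : HasDerivAt (fun t => S t - ud) (u1 s) s := (hSder s hs).sub_const ud
    have hN := (HasDerivAt.inner (𝕜 := ℝ) hsub' hsub').const_mul (1/2 : ℝ)
    have hsum := hN.add (hφd s hsab)
    have heq : F =ᶠ[nhds s] fun t => 1/2 * ⟪S t - ud, S t - ud⟫ + φ t := by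
      filter_upwards [Ioo_mem_nhds hsab.1 hsab.2] with t ht
      rw [hF t ht, real_inner_self_eq_norm_sq]
    have hval : 1/2 * (⟪S s - ud, u1 s⟫ + ⟪u1 s, S s - ud⟫) + φ' s = G s := by
      have hcomm : ⟪u1 s, S s - ud⟫ = ⟪S s - ud, u1 s⟫ := real_inner_comm _ _
      simp only [hGdef, hcomm]
      ring
    exact hval ▸ (hsum.congr_of_eventuallyEq heq)
  have hGder : HasDerivAt G (‖u1 sbar‖ ^ 2 + ⟪S sbar - ud, u2 sbar⟫ + φ'' sbar) sbar := by
    have hsub' : HasDerivAt (fun t => S t - ud) (u1 sbar) sbar :=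
      (hSder sbar ⟨hcs, hsd⟩).sub_const ud
    have hI := HasDerivAt.inner (𝕜 := ℝ) hsub' hu1der
    have h2 := hI.add (hφdd sbar ⟨hsa, hsb⟩)
    rw [hGdef]
    exact h2.congr_deriv (by rw [← real_inner_self_eq_norm_sq]; ring)
  have hG0 : G sbar = 0 := by simp only [hGdef]; exact hfirst
  -- positivity of the slope of G at sbar
  have hslope : Tendsto (slope G sbar) (nhdsWithin sbar {sbar}ᶜ)
      (nhds (‖u1 sbar‖ ^ 2 + ⟪S sbar - ud, u2 sbar⟫ + φ'' sbar)) :=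
    hasDerivAt_iff_tendsto_slope.mp hGder
  have hev : ∀ᶠ x in nhdsWithin sbar {sbar}ᶜ, 0 < slope G sbar x :=
    hslope.eventually (eventually_gt_nhds hsecond)
  obtain ⟨δ', hδ'0, hball⟩ := Metric.mem_nhdsWithin_iff.mp hev
  have hsl : ∀ ξ, ξ ≠ sbar → |ξ - sbar| < δ' → 0 < G ξ / (ξ - sbar) := by
    intro ξ h1 h2
    have hm : ξ ∈ Metric.ball sbar δ' ∩ {sbar}ᶜ :=
      ⟨by simpa [Metric.mem_ball, Real.dist_eq] using h2, h1⟩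
    have h4 : 0 < slope G sbar ξ := hball hm
    rw [slope_def_field, hG0, sub_zero] at h4
    exact h4
  refine ⟨min δ' ε, lt_min hδ'0 hε0, ?_⟩
  intro s hsab' hne hdist
  have hsε : |s - sbar| < ε := lt_of_lt_of_le hdist (min_le_right _ _)
  have hsδ : |s - sbar| < δ' := lt_of_lt_of_le hdist (min_le_left _ _)
  have hsIoo : s ∈ Set.Ioo c d := by
    rw [abs_lt] at hsε
    exact ⟨by rw [hcdef]; linarith, by rw [hddef]; linarith⟩
  rcases lt_or_gt_of_ne hne with hlt | hgt
  · -- s < sbar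
    have hcont : ContinuousOn F (Set.Icc s sbar) := by
      intro x hx
      have hxIoo : x ∈ Set.Ioo c d := ⟨lt_of_lt_of_le hsIoo.1 hx.1, lt_of_le_of_lt hx.2 hsd⟩
      exact ((hFder x hxIoo).continuousAt).continuousWithinAt
    have hder : ∀ x ∈ Set.Ioo s sbar, HasDerivAt F (G x) x := fun x hx =>
      hFder x ⟨lt_trans hsIoo.1 hx.1, lt_trans hx.2 hsd⟩
    obtain ⟨ξ, hξ, heq⟩ := exists_hasDerivAt_eq_slope F G hlt hcont hder
    have hξδ : |ξ - sbar| < δ' := by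
      rw [abs_lt] at hsδ ⊢
      constructor <;> [linarith [hξ.1]; linarith [hξ.2]]
    have hpos := hsl ξ (ne_of_lt hξ.2) hξδ
    have hξneg : ξ - sbar < 0 := sub_neg.mpr hξ.2
    have hGξ : G ξ < 0 := by
      rcases div_pos_iff.mp hpos with ⟨h1, h2⟩ | ⟨h1, h2⟩
      · linarith
      · exact h1
    rw [heq] at hGξ
    have hd0 : 0 < sbar - s := sub_pos.mpr hlt
    rcases div_neg_iff.mp hGξ with ⟨h1, h2⟩ | ⟨h1, h2⟩
    · linarith
    · linarith
  · -- sbar < s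
    have hcont : ContinuousOn F (Set.Icc sbar s) := by
      intro x hx
      have hxIoo : x ∈ Set.Ioo c d := ⟨lt_of_lt_of_le hcs hx.1, lt_of_le_of_lt hx.2 hsIoo.2⟩
      exact ((hFder x hxIoo).continuousAt).continuousWithinAt
    have hder : ∀ x ∈ Set.Ioo sbar s, HasDerivAt F (G x) x := fun x hx =>
      hFder x ⟨lt_trans hcs hx.1, lt_trans hx.2 hsIoo.2⟩
    obtain ⟨ξ, hξ, heq⟩ := exists_hasDerivAt_eq_slope F G hgt hcont hder
    have hξδ : |ξ - sbar| < δ' := by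
      rw [abs_lt] at hsδ ⊢
      constructor <;> [linarith [hξ.1]; linarith [hξ.2]]
    have hpos := hsl ξ (ne_of_gt hξ.1) hξδ
    have hξpos : 0 < ξ - sbar := sub_pos.mpr hξ.1
    have hGξ : 0 < G ξ := by
      rcases div_pos_iff.mp hpos with ⟨h1, h2⟩ | ⟨h1, h2⟩
      · exact h1
      · linarith
    rw [heq] at hGξ
    have hd0 : 0 < s - sbar := sub_pos.mpr hgt
    rcases div_pos_iff.mp hGξ with ⟨h1, h2⟩ | ⟨h1, h2⟩
    · linarith
    · linarith
end

section
/- Assume 0 < a and that φ is strongly convex with parameter ξ > 0, i.e. (φ'(s₁) − φ'(s₂))·(s₁ − s₂) ≥ ξ|s₁ − s₂|² for all s₁, s₂ ∈ (a,b). Then F is twice differentiable on (a,b), its second derivative equals F''(s) = ‖u^{(1)}(s)‖² + ⟨S(s) − u_d, u^{(2)}(s)⟩ + φ''(s), and there exists a constant C > 0 depending only on λ₁ and a such that F''(s) ≥ ξ − C·(‖f‖ + ‖u_d‖)·‖f‖ for every s ∈ (a,b). In particular, if (‖f‖ + ‖u_d‖)·‖f‖ < ξ/C, then there exists ϑ >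 0 with F''(s) ≥ ϑ for every s ∈ (a,b). -/
open Real Filter
open scoped RealInnerProductSpace

open Topology
open scoped ENNReal

lemma l2_norm_le (X Y : lp (fun _ : ℕ => ℝ) 2) (h : ∀ k, |X k| ≤ |Y k|) : ‖X‖ ≤ ‖Y‖ := by
  have h2 : 0 < (2 : ℝ≥0∞).toReal := by norm_num
  have hXY : ‖X‖ ^ (2 : ℝ≥0∞).toReal ≤ ‖Y‖ ^ (2 : ℝ≥0∞).toReal := by
    rw [lp.norm_rpow_eq_tsum h2, lp.norm_rpow_eq_tsum h2]
    refine Summable.tsum_le_tsum (fun k => ?_) ((lp.memℓp X).summable h2) ((lp.memℓp Y).summable h2)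
    exact Real.rpow_le_rpow (norm_nonneg _) (by simpa [Real.norm_eq_abs] using h k) h2.le
  have ht : (2 : ℝ≥0∞).toReal = ((2 : ℕ) : ℝ) := by norm_num
  rw [ht, Real.rpow_natCast, Real.rpow_natCast] at hXY
  exact (pow_le_pow_iff_left₀ (norm_nonneg _) (norm_nonneg _) (by norm_num)).mp hXY

lemma abs_exp_sub_one_sub_le' (u : ℝ) : |Real.exp u - 1 - u| ≤ 3 * u ^ 2 * Real.exp |u| := by
  rcases le_or_gt |u| 1 with h | h
  · have h1 := Real.abs_exp_sub_one_sub_id_le h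
    have h2 : (1 : ℝ) ≤ Real.exp |u| := Real.one_le_exp (abs_nonneg u)
    nlinarith [sq_nonneg u]
  · have h1 : |Real.exp u - 1 - u| ≤ Real.exp u + 1 + |u| := by
      calc |Real.exp u - 1 - u| ≤ |Real.exp u - 1| + |u| := abs_sub _ _
        _ ≤ (|Real.exp u| + |(1:ℝ)|) + |u| := by gcongr; exact abs_sub _ _
        _ = Real.exp u + 1 + |u| := by rw [abs_of_pos (Real.exp_pos u), abs_one]
    have h2 : Real.exp u ≤ Real.exp |u| := Real.exp_le_exp.2 (le_abs_self u)
    have h3 : (1:ℝ) ≤ Real.exp |u| := Real.one_le_exp (abs_nonneg u)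
    have h4 : |u| ≤ Real.exp |u| := (Real.add_one_le_exp |u|).trans' (by linarith [abs_nonneg u])
    have h5 : (1:ℝ) ≤ u ^ 2 := by nlinarith [sq_abs u]
    nlinarith [Real.exp_pos |u|]

lemma pow_mul_exp_neg_le (m : ℕ) {c x : ℝ} (hc : 0 < c) (hx : 0 ≤ x) :
    x ^ m * Real.exp (-(c * x)) ≤ ((m : ℝ) / c) ^ m := by
  rcases Nat.eq_zero_or_pos m with rfl | hm
  · have : Real.exp (-(c * x)) ≤ 1 := Real.exp_le_one_iff.2 (by nlinarith)
    simpa using this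
  have hm' : ((m : ℝ)) ≠ 0 := Nat.cast_ne_zero.2 hm.ne'
  have hu : 0 ≤ c * x / m := by positivity
  have key : (c * x / m) ^ m ≤ Real.exp (c * x) := by
    calc (c * x / m) ^ m ≤ Real.exp (c * x / m) ^ m :=
          pow_le_pow_left₀ hu ((Real.add_one_le_exp _).trans' (by linarith)) m
      _ = Real.exp (c * x / m * m) := by rw [← Real.exp_nat_mul]; ring_nf
      _ = Real.exp (c * x) := by rw [div_mul_cancel₀ _ hm']
  have hx' : x ^ m = ((m : ℝ) / c) ^ m * (c * x / m) ^ m := by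
    rw [← mul_pow]; congr 1; field_simp
  rw [hx', Real.exp_neg, mul_assoc]
  have h1 : (c * x / m) ^ m * (Real.exp (c * x))⁻¹ ≤ 1 := by
    rw [← div_eq_mul_inv, div_le_one (Real.exp_pos _)]; exact key
  nlinarith [pow_nonneg (le_of_lt (by positivity : (0:ℝ) < (m:ℝ)/c)) m, Real.exp_pos (c*x), pow_nonneg hu m]

lemma key_bound (lam1 : ℝ) (hlam1 : 0 < lam1) {y : ℝ} (hy : lam1 ≤ y) (m : ℕ)
    {c s τ : ℝ} (hc : 0 < c) (hτ : 0 ≤ τ) (hcs : c ≤ s - τ) (hs2 : s + τ ≤ 2) :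
    |Real.log y| ^ m * Real.exp (-(s * Real.log y) + τ * |Real.log y|) ≤
      ((m : ℝ) / c) ^ m + |Real.log lam1| ^ m * Real.exp (2 * |Real.log lam1|) := by
  set x := Real.log y with hx
  have hxl : Real.log lam1 ≤ x := Real.log_le_log hlam1 hy
  rcases le_or_gt 0 x with hx0 | hx0
  · have habs : |x| = x := abs_of_nonneg hx0
    have h1 : -(s*x) + τ*x ≤ -(c*x) := by nlinarith
    calc |x| ^ m * Real.exp (-(s*x) + τ*|x|) ≤ x ^ m * Real.exp (-(c*x)) := by
          rw [habs]
          exact mul_le_mul_of_nonneg_left (Real.exp_le_exp.2 h1) (pow_nonneg hx0 m)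
      _ ≤ ((m : ℝ) / c) ^ m := pow_mul_exp_neg_le m hc hx0
      _ ≤ _ := le_add_of_nonneg_right (by positivity)
  · have hneg : Real.log lam1 < 0 := lt_of_le_of_lt hxl hx0
    have hL : |x| ≤ |Real.log lam1| := by
      rw [abs_of_neg hx0, abs_of_neg hneg]; linarith
    have hs0 : 0 ≤ s + τ := by nlinarith
    have h1 : -(s*x) + τ*|x| ≤ 2*|Real.log lam1| := by
      rw [abs_of_neg hx0]
      have e : -(s*x) + τ*(-x) = (s+τ)*(-x) := by ring
      rw [e]
      have hxm : 0 < -x := by linarith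
      calc (s+τ)*(-x) ≤ 2*(-x) := mul_le_mul_of_nonneg_right hs2 hxm.le
        _ ≤ 2*|Real.log lam1| := by rw [abs_of_neg hneg]; linarith
    calc |x| ^ m * Real.exp (-(s*x) + τ*|x|)
        ≤ |Real.log lam1| ^ m * Real.exp (2*|Real.log lam1|) :=
          mul_le_mul (pow_le_pow_left₀ (abs_nonneg x) hL m) (Real.exp_le_exp.2 h1)
            (Real.exp_pos _).le (pow_nonneg (abs_nonneg _) m)
      _ ≤ _ := le_add_of_nonneg_left (by positivity)

set_option maxHeartbeats 1000000 in
lemma hasDerivAt_lp_pow (lam1 : ℝ) (hlam1 : 0 < lam1) (lam : ℕ → ℝ) (hlam : ∀ k, lam1 ≤ lam k)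
    (f : lp (fun _ : ℕ => ℝ) 2) (m : ℕ) (V W : ℝ → lp (fun _ : ℕ => ℝ) 2)
    (hV : ∀ t ∈ Set.Ioo (0:ℝ) 1, ∀ k, V t k = (-Real.log (lam k)) ^ m * lam k ^ (-t) * f k)
    (s : ℝ) (hs : s ∈ Set.Ioo (0:ℝ) 1)
    (hW : ∀ k, W s k = (-Real.log (lam k)) ^ (m+1) * lam k ^ (-s) * f k) :
    HasDerivAt V (W s) s := by
  obtain ⟨hs0, hs1⟩ := hs
  set L := |Real.log lam1| with hL
  set B : ℝ := (((m+2 : ℕ) : ℝ) / (s/2)) ^ (m+2) + L ^ (m+2) * Real.exp (2*L) with hB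
  set D : ℝ := 3 * B with hDdef
  have hB0 : 0 ≤ B := by positivity
  have hD0 : 0 ≤ D := by positivity
  rw [hasDerivAt_iff_tendsto]
  set δ := min (s/2) ((1-s)/2) with hδ
  have hδ0 : 0 < δ := lt_min (by linarith) (by linarith)
  have hbound : ∀ t, |t - s| ≤ δ → ‖V t - V s - (t - s) • W s‖ ≤ (t-s)^2 * D * ‖f‖ := by
    intro t ht
    have htd1 : |t - s| ≤ s/2 := ht.trans (min_le_left _ _)
    have htd2 : |t - s| ≤ (1-s)/2 := ht.trans (min_le_right _ _)
    have habs1 := abs_le.1 htd1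
    have habs2 := abs_le.1 htd2
    have htI : t ∈ Set.Ioo (0:ℝ) 1 := ⟨by linarith [habs1.1], by linarith [habs2.2]⟩
    have coord : ∀ k, |(V t - V s - (t-s) • W s) k| ≤ |(((t-s)^2 * D) • f) k| := by
      intro k
      have hyk : 0 < lam k := lt_of_lt_of_le hlam1 (hlam k)
      set x := Real.log (lam k) with hxdef
      have hrp : ∀ r : ℝ, lam k ^ (-r) = Real.exp (-(r * x)) := fun r => by
        rw [Real.rpow_def_of_pos hyk, hxdef]; ring_nf
      have happ : (V t - V s - (t-s) • W s) k = V t k - V s k - (t-s) * W s k := by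
        simp [lp.coeFn_sub, lp.coeFn_smul, Pi.sub_apply, Pi.smul_apply, smul_eq_mul]
        rfl
      rw [happ, hV t htI k, hV s ⟨hs0, hs1⟩ k, hW k, hrp, hrp]
      have key : (-x)^m * Real.exp (-(t*x)) * f k - (-x)^m * Real.exp (-(s*x)) * f k
          - (t-s)*((-x)^(m+1) * Real.exp (-(s*x)) * f k)
          = ((-x)^m * Real.exp (-(s*x)) * f k) *
            (Real.exp (-((t-s)*x)) - 1 - (-((t-s)*x))) := by
        rw [show -(t*x) = -(s*x) + -((t-s)*x) by ring, Real.exp_add]; ring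
      rw [key, abs_mul]
      have h1 := abs_exp_sub_one_sub_le' (-((t-s)*x))
      have e4 : |(-x)^m * Real.exp (-(s*x)) * f k| = |x|^m * Real.exp (-(s*x)) * |f k| := by
        rw [abs_mul, abs_mul, abs_pow, abs_neg, Real.abs_exp]
      have step1 : |(-x)^m * Real.exp (-(s*x)) * f k| * |Real.exp (-((t-s)*x)) - 1 - (-((t-s)*x))|
          ≤ (t-s)^2 * (3 * (|x|^(m+2) * Real.exp (-(s*x) + |t - s| * |x|))) * |f k| := by
        have e1 : |-((t-s)*x)| = |t - s| * |x| := by rw [abs_neg, abs_mul]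
        have heq : |x|^m * Real.exp (-(s*x)) * |f k| * (3 * (-((t-s)*x))^2 * Real.exp (|t - s| * |x|))
            = (t-s)^2 * (3 * (|x|^(m+2) * Real.exp (-(s*x) + |t - s| * |x|))) * |f k| := by
          rw [Real.exp_add, show (m+2) = m + 2 from rfl, pow_add, sq_abs]; ring
        calc _ ≤ (|x|^m * Real.exp (-(s*x)) * |f k|) * (3 * (-((t-s)*x))^2 * Real.exp (|t - s| * |x|)) := by
              rw [e4]; rw [← e1]
              exact mul_le_mul_of_nonneg_left h1 (by positivity)
          _ = _ := heq
      refine step1.trans ?_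
      have hq : |x|^(m+2) * Real.exp (-(s*x) + |t - s| * |x|) ≤ B := by
        have := key_bound lam1 hlam1 (hlam k) (m+2) (c := s/2) (s := s) (τ := |t - s|)
          (by linarith) (abs_nonneg _) (by linarith [habs1.2]) (by linarith [habs2.2, abs_nonneg (t-s)])
        simpa [hB, hL] using this
      have rhs : |(((t-s)^2 * D) • f) k| = (t-s)^2 * D * |f k| := by
        rw [lp.coeFn_smul, Pi.smul_apply, smul_eq_mul, abs_mul, abs_of_nonneg (by positivity)]
      rw [rhs, hDdef]
      have h3 : 3 * (|x|^(m+2) * Real.exp (-(s*x) + |t - s| * |x|)) ≤ 3 * B := by linarith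
      nlinarith [sq_nonneg (t-s), abs_nonneg (f k), sq_nonneg (t-s) , mul_nonneg (sq_nonneg (t-s)) (abs_nonneg (f k))]
    calc ‖V t - V s - (t-s) • W s‖ ≤ ‖((t-s)^2 * D) • f‖ := l2_norm_le _ _ coord
      _ = (t-s)^2 * D * ‖f‖ := by
          rw [norm_smul, Real.norm_eq_abs, abs_of_nonneg (by positivity)]
  have hg : Tendsto (fun t => |t - s| * (D * ‖f‖)) (𝓝 s) (𝓝 0) := by
    have hc : Continuous fun t : ℝ => |t - s| := (continuous_id.sub continuous_const).abs
    have h1 : Tendsto (fun t : ℝ => |t - s|) (𝓝 s) (𝓝 0) :=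
      hc.tendsto' s 0 (by rw [sub_self, abs_zero])
    have h2 := h1.mul_const (D * ‖f‖)
    rw [zero_mul] at h2
    exact h2
  refine squeeze_zero' ?_ ?_ hg
  · filter_upwards with t
    exact mul_nonneg (inv_nonneg.2 (norm_nonneg _)) (norm_nonneg _)
  · rw [Metric.eventually_nhds_iff]
    refine ⟨δ, hδ0, fun t ht => ?_⟩
    rw [Real.dist_eq] at ht
    rcases eq_or_ne t s with rfl | hne
    · simp
    have hne' : |t - s| ≠ 0 := by simpa [sub_eq_zero] using hne
    calc ‖t-s‖⁻¹ * ‖V t - V s - (t-s) • W s‖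
        ≤ ‖t-s‖⁻¹ * ((t-s)^2 * D * ‖f‖) := by
          exact mul_le_mul_of_nonneg_left (hbound t ht.le) (inv_nonneg.2 (norm_nonneg _))
      _ = (|t-s|⁻¹ * |t-s|) * (|t-s| * (D * ‖f‖)) := by
          rw [Real.norm_eq_abs, show (t-s)^2 = |t-s| * |t-s| by rw [abs_mul_abs_self]; ring]
          ring
      _ = |t-s| * (D * ‖f‖) := by rw [inv_mul_cancel₀ hne', one_mul]

/-- Under strong convexity of `φ` (with parameter `ξ > 0`) and `0 < a`, the reduced cost
functional `F` is twice differentiable on `(a,b)`, its second derivative equals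
`F''(s) = ‖u¹(s)‖² + ⟨S(s) − u_d, u²(s)⟩ + φ''(s)`, and there is `C > 0`, depending only on
`λ₁` and `a`, with `F''(s) ≥ ξ − C(‖f‖ + ‖u_d‖)‖f‖` on `(a,b)`.  In particular, if
`(‖f‖ + ‖u_d‖)‖f‖ < ξ/C` then `F'' ≥ ϑ` on `(a,b)` for some `ϑ > 0`. -/
theorem second_derivative_reduced_cost_bound (lam1 : ℝ) (hlam1 : 0 < lam1) (lam : ℕ → ℝ)
    (hlam : ∀ k, lam1 ≤ lam k) (f : lp (fun _ : ℕ => ℝ) 2)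
    (S : ℝ → lp (fun _ : ℕ => ℝ) 2)
    (hS : ∀ s ∈ Set.Ioo (0 : ℝ) 1, ∀ k, S s k = lam k ^ (-s) * f k)
    (u1 u2 : ℝ → lp (fun _ : ℕ => ℝ) 2)
    (hu1 : ∀ s ∈ Set.Ioo (0 : ℝ) 1, ∀ k,
      u1 s k = -(Real.log (lam k)) * lam k ^ (-s) * f k)
    (hu2 : ∀ s ∈ Set.Ioo (0 : ℝ) 1, ∀ k,
      u2 s k = (Real.log (lam k)) ^ 2 * lam k ^ (-s) * f k)
    (ud : lp (fun _ : ℕ => ℝ) 2) (a b : ℝ) (ha : 0 < a) (hab : a < b) (hb : b ≤ 1)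
    (φ φ' φ'' : ℝ → ℝ) (hφ0 : ∀ s ∈ Set.Ioo a b, 0 ≤ φ s)
    (hφconv : ConvexOn ℝ (Set.Ioo a b) φ)
    (hφd : ∀ s ∈ Set.Ioo a b, HasDerivAt φ (φ' s) s)
    (hφdd : ∀ s ∈ Set.Ioo a b, HasDerivAt φ' (φ'' s) s)
    (hφa : Tendsto φ (nhdsWithin a (Set.Ioi a)) atTop)
    (hφb : Tendsto φ (nhdsWithin b (Set.Iio b)) atTop)
    (ξ : ℝ) (hξ : 0 < ξ)
    (hstrong : ∀ s1 ∈ Set.Ioo a b, ∀ s2 ∈ Set.Ioo a b,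
      ξ * |s1 - s2| ^ 2 ≤ (φ' s1 - φ' s2) * (s1 - s2))
    (F : ℝ → ℝ) (hF : ∀ s ∈ Set.Ioo a b, F s = 1 / 2 * ‖S s - ud‖ ^ 2 + φ s) :
    (∀ s ∈ Set.Ioo a b,
        HasDerivAt F (⟪S s - ud, u1 s⟫ + φ' s) s ∧
        HasDerivAt (fun t => ⟪S t - ud, u1 t⟫ + φ' t)
          (‖u1 s‖ ^ 2 + ⟪S s - ud, u2 s⟫ + φ'' s) s) ∧
    ∃ C : ℝ, 0 < C ∧
      (∀ s ∈ Set.Ioo a b,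
        ξ - C * (‖f‖ + ‖ud‖) * ‖f‖ ≤ ‖u1 s‖ ^ 2 + ⟪S s - ud, u2 s⟫ + φ'' s) ∧
      ((‖f‖ + ‖ud‖) * ‖f‖ < ξ / C →
        ∃ ϑ : ℝ, 0 < ϑ ∧ ∀ s ∈ Set.Ioo a b,
          ϑ ≤ ‖u1 s‖ ^ 2 + ⟪S s - ud, u2 s⟫ + φ'' s) := by
  have hsub : Set.Ioo a b ⊆ Set.Ioo (0:ℝ) 1 :=
    fun t ht => ⟨lt_trans ha ht.1, lt_of_lt_of_le ht.2 hb⟩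
  have hSd : ∀ s ∈ Set.Ioo a b, HasDerivAt S (u1 s) s := by
    intro s hs
    refine hasDerivAt_lp_pow lam1 hlam1 lam hlam f 0 S u1 ?_ s (hsub hs) ?_
    · intro t ht k; rw [hS t ht k]; ring
    · intro k; rw [hu1 s (hsub hs) k]; ring
  have hu1d : ∀ s ∈ Set.Ioo a b, HasDerivAt u1 (u2 s) s := by
    intro s hs
    refine hasDerivAt_lp_pow lam1 hlam1 lam hlam f 1 u1 u2 ?_ s (hsub hs) ?_
    · intro t ht k; rw [hu1 t ht k]; ring
    · intro k; rw [hu2 s (hsub hs) k]; ring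
  have hGd : ∀ s ∈ Set.Ioo a b, HasDerivAt (fun t => S t - ud) (u1 s) s :=
    fun s hs => (hSd s hs).sub_const ud
  constructor
  · intro s hs
    constructor
    · have hinner : HasDerivAt (fun t => ⟪S t - ud, S t - ud⟫)
          (⟪S s - ud, u1 s⟫ + ⟪u1 s, S s - ud⟫) s :=
        HasDerivAt.inner ℝ (hGd s hs) (hGd s hs)
      have h1 : HasDerivAt (fun t => 1/2 * ⟪S t - ud, S t - ud⟫ + φ t)
          (1/2 * (⟪S s - ud, u1 s⟫ + ⟪u1 s, S s - ud⟫) + φ' s) s :=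
        (hinner.const_mul (1/2)).add (hφd s hs)
      have heq : F =ᶠ[𝓝 s] fun t => 1/2 * ⟪S t - ud, S t - ud⟫ + φ t := by
        filter_upwards [isOpen_Ioo.eventually_mem hs] with t ht
        rw [hF t ht, real_inner_self_eq_norm_sq]
      have h2 := h1.congr_of_eventuallyEq heq
      refine h2.congr_deriv ?_
      rw [real_inner_comm (u1 s) (S s - ud)]; ring
    · have h1 : HasDerivAt (fun t => ⟪S t - ud, u1 t⟫ + φ' t)
          ((⟪S s - ud, u2 s⟫ + ⟪u1 s, u1 s⟫) + φ'' s) s :=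
        (HasDerivAt.inner ℝ (hGd s hs) (hu1d s hs)).add (hφdd s hs)
      convert h1 using 1
      rw [real_inner_self_eq_norm_sq]; ring
  · -- second derivative lower bound
    have hφ''ξ : ∀ s ∈ Set.Ioo a b, ξ ≤ φ'' s := by
      intro s hs
      have hslope := hasDerivAt_iff_tendsto_slope.1 (hφdd s hs)
      have hev : ∀ᶠ t in 𝓝[≠] s, ξ ≤ slope φ' s t := by
        have h1 : ∀ᶠ t in 𝓝[≠] s, t ∈ Set.Ioo a b :=
          eventually_nhdsWithin_of_eventually_nhds (isOpen_Ioo.eventually_mem hs)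
        have h2 : ∀ᶠ t in 𝓝[≠] s, t ≠ s := by
          simpa using eventually_mem_nhdsWithin (a := s) (s := {s}ᶜ)
        filter_upwards [h1, h2] with t htI htne
        have hd : t - s ≠ 0 := sub_ne_zero.2 htne
        have hstr := hstrong t htI s hs
        rw [sq_abs] at hstr
        have hd2 : 0 < (t - s)^2 := by positivity
        rw [slope_def_field]
        have hrw : (φ' t - φ' s) / (t - s) = ((φ' t - φ' s) * (t - s)) / (t - s)^2 := by
          field_simp
        rw [hrw, le_div_iff₀ hd2]
        exact hstr
      exact ge_of_tendsto hslope hev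
    set L := |Real.log lam1| with hLdef
    set B0 : ℝ := 1 + Real.exp (2*L) with hB0def
    set B2 : ℝ := ((2:ℝ)/a)^2 + L^2 * Real.exp (2*L) with hB2def
    have hB0one : (1:ℝ) ≤ B0 := by
      have := Real.exp_pos (2*L); simp only [hB0def]; linarith
    have hB2pos : 0 < B2 := by
      have h1 : (0:ℝ) < ((2:ℝ)/a)^2 := by positivity
      have h2 : 0 ≤ L^2 * Real.exp (2*L) := by positivity
      simp only [hB2def]; linarith
    have hSb : ∀ s ∈ Set.Ioo a b, ‖S s‖ ≤ B0 * ‖f‖ := by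
      intro s hs
      have hcoord : ∀ k, |S s k| ≤ |(B0 • f) k| := by
        intro k
        have hyk : 0 < lam k := lt_of_lt_of_le hlam1 (hlam k)
        have hkb := key_bound lam1 hlam1 (hlam k) 0 (c := a) (s := s) (τ := 0)
          ha le_rfl (by simpa using hs.1.le) (by have := hs.2; linarith)
        rw [hS s (hsub hs) k, lp.coeFn_smul, Pi.smul_apply, smul_eq_mul]
        rw [abs_mul, abs_mul]
        have h1 : |lam k ^ (-s)| = Real.exp (-(s * Real.log (lam k))) := by
          rw [Real.rpow_def_of_pos hyk, Real.abs_exp]; ring_nf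
        rw [h1]
        have h2 : Real.exp (-(s * Real.log (lam k))) ≤ B0 := by
          simpa [hB0def, hLdef] using hkb
        have h3 : |B0| = B0 := abs_of_pos (by linarith)
        rw [h3]
        exact mul_le_mul_of_nonneg_right h2 (abs_nonneg _)
      calc ‖S s‖ ≤ ‖B0 • f‖ := l2_norm_le _ _ hcoord
        _ = B0 * ‖f‖ := by
            rw [norm_smul, Real.norm_eq_abs, abs_of_pos (by linarith)]
    have hu2b : ∀ s ∈ Set.Ioo a b, ‖u2 s‖ ≤ B2 * ‖f‖ := by
      intro s hs
      have hcoord : ∀ k, |u2 s k| ≤ |(B2 • f) k| := by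
        intro k
        have hyk : 0 < lam k := lt_of_lt_of_le hlam1 (hlam k)
        have hkb := key_bound lam1 hlam1 (hlam k) 2 (c := a) (s := s) (τ := 0)
          ha le_rfl (by simpa using hs.1.le) (by have := hs.2; linarith)
        rw [hu2 s (hsub hs) k, lp.coeFn_smul, Pi.smul_apply, smul_eq_mul]
        rw [abs_mul, abs_mul, abs_mul]
        have h1 : |lam k ^ (-s)| = Real.exp (-(s * Real.log (lam k))) := by
          rw [Real.rpow_def_of_pos hyk, Real.abs_exp]; ring_nf
        rw [h1]
        have h2 : |Real.log (lam k) ^ 2| * Real.exp (-(s * Real.log (lam k))) ≤ B2 := by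
          have e : |Real.log (lam k) ^ 2| = |Real.log (lam k)| ^ 2 := by
            rw [abs_pow]
          rw [e]
          have e2 : (((2:ℕ):ℝ)/a)^2 = ((2:ℝ)/a)^2 := by norm_num
          simpa [hB2def, hLdef, e2] using hkb
        have h3 : |B2| = B2 := abs_of_pos hB2pos
        rw [h3]
        exact mul_le_mul_of_nonneg_right h2 (abs_nonneg _)
      refine (l2_norm_le _ _ hcoord).trans (le_of_eq ?_)
      rw [norm_smul, Real.norm_eq_abs, abs_of_pos hB2pos]
    refine ⟨B0 * B2, by positivity, ?_, ?_⟩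
    · intro s hs
      have hCS : |⟪S s - ud, u2 s⟫| ≤ ‖S s - ud‖ * ‖u2 s‖ := abs_real_inner_le_norm _ _
      have hn1 : ‖S s - ud‖ ≤ B0 * ‖f‖ + ‖ud‖ :=
        (norm_sub_le _ _).trans (by linarith [hSb s hs])
      have hn2 := hu2b s hs
      have hfn : 0 ≤ ‖f‖ := norm_nonneg f
      have hudn : 0 ≤ ‖ud‖ := norm_nonneg ud
      have hu2n : 0 ≤ ‖u2 s‖ := norm_nonneg _
      have hSn : 0 ≤ ‖S s - ud‖ := norm_nonneg _
      have hprod : ‖S s - ud‖ * ‖u2 s‖ ≤ (B0 * ‖f‖ + ‖ud‖) * (B2 * ‖f‖) :=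
        mul_le_mul hn1 hn2 hu2n (by nlinarith)
      have hfinal : (B0 * ‖f‖ + ‖ud‖) * (B2 * ‖f‖) ≤ B0 * B2 * (‖f‖ + ‖ud‖) * ‖f‖ := by
        nlinarith [mul_nonneg (mul_nonneg hB2pos.le hfn) hudn]
      have hinner_lb : -(B0 * B2 * (‖f‖ + ‖ud‖) * ‖f‖) ≤ ⟪S s - ud, u2 s⟫ := by
        have := neg_abs_le (⟪S s - ud, u2 s⟫ : ℝ)
        linarith [hCS.trans (hprod.trans hfinal)]
      have hφξ := hφ''ξ s hs
      have hu1n : 0 ≤ ‖u1 s‖^2 := sq_nonneg _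
      linarith
    · intro hsmall
      refine ⟨ξ - B0 * B2 * (‖f‖ + ‖ud‖) * ‖f‖, ?_, ?_⟩
      · have hCpos : (0:ℝ) < B0 * B2 := by positivity
        rw [lt_div_iff₀ hCpos] at hsmall
        nlinarith
      · intro s hs
        -- reuse the bound above
        have hCS : |⟪S s - ud, u2 s⟫| ≤ ‖S s - ud‖ * ‖u2 s‖ := abs_real_inner_le_norm _ _
        have hn1 : ‖S s - ud‖ ≤ B0 * ‖f‖ + ‖ud‖ :=
          (norm_sub_le _ _).trans (by linarith [hSb s hs])
        have hn2 := hu2b s hs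
        have hfn : 0 ≤ ‖f‖ := norm_nonneg f
        have hudn : 0 ≤ ‖ud‖ := norm_nonneg ud
        have hu2n : 0 ≤ ‖u2 s‖ := norm_nonneg _
        have hprod : ‖S s - ud‖ * ‖u2 s‖ ≤ (B0 * ‖f‖ + ‖ud‖) * (B2 * ‖f‖) :=
          mul_le_mul hn1 hn2 hu2n (by nlinarith)
        have hfinal : (B0 * ‖f‖ + ‖ud‖) * (B2 * ‖f‖) ≤ B0 * B2 * (‖f‖ + ‖ud‖) * ‖f‖ := by
          nlinarith [mul_nonneg (mul_nonneg hB2pos.le hfn) hudn]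
        have hinner_lb : -(B0 * B2 * (‖f‖ + ‖ud‖) * ‖f‖) ≤ ⟪S s - ud, u2 s⟫ := by
          have := neg_abs_le (⟪S s - ud, u2 s⟫ : ℝ)
          linarith [hCS.trans (hprod.trans hfinal)]
        have hφξ := hφ''ξ s hs
        have hu1n : 0 ≤ ‖u1 s‖^2 := sq_nonneg _
        linarith
end

section
/- Assume 0 < a < b < 1. There exists a constant C > 0, depending only on λ₁, such that for every s ∈ (a,b) and every σ > 0 with s + σ ∈ (a,b) and s − σ ∈ (a,b), the centered difference satisfies ‖u^{(1)}(s) − (S(s+σ) − S(s−σ))/(2σ)‖ ≤ C · σ² · a^{-3} · ‖f‖. -/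
open Real

lemma aux_sinh_le_mul_exp {x : ℝ} (hx : 0 ≤ x) : Real.sinh x ≤ x * Real.exp x := by
  have hneg : Real.exp (-x) = Real.exp x * Real.exp (-(2*x)) := by
    rw [← Real.exp_add]; ring_nf
  have h1 : 1 - Real.exp (-(2*x)) ≤ 2*x := by
    have := Real.add_one_le_exp (-(2*x)); linarith
  have h2 : (0:ℝ) < Real.exp x := Real.exp_pos x
  rw [Real.sinh_eq, hneg]
  nlinarith

lemma aux_cosh_le {x : ℝ} (hx : 0 ≤ x) :
    Real.cosh x ≤ 1 + (x^2/2 + x^3/6) * Real.exp x := by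
  set G : ℝ → ℝ := fun y => 1 + (y^2/2 + y^3/6) * Real.exp y - Real.cosh y with hG
  have hder : ∀ y : ℝ, HasDerivAt G
      ((y + y^2/2) * Real.exp y + (y^2/2 + y^3/6) * Real.exp y - Real.sinh y) y := by
    intro y
    have hp : HasDerivAt (fun y : ℝ => y^2/2 + y^3/6) (y + y^2/2) y := by
      have := ((hasDerivAt_pow 2 y).div_const 2).add ((hasDerivAt_pow 3 y).div_const 6)
      exact this.congr_deriv (by push_cast; ring)
    exact ((hp.mul (Real.hasDerivAt_exp y)).const_add 1).sub (Real.hasDerivAt_cosh y)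
  have hmono : MonotoneOn G (Set.Ici (0:ℝ)) := by
    apply monotoneOn_of_deriv_nonneg (convex_Ici 0)
    · exact Continuous.continuousOn (by fun_prop)
    · intro y hy
      exact (hder y).differentiableAt.differentiableWithinAt
    · intro y hy
      rw [interior_Ici] at hy
      rw [(hder y).deriv]
      have hy0 : (0:ℝ) ≤ y := le_of_lt hy
      have h1 := aux_sinh_le_mul_exp hy0
      have h2 : (0:ℝ) < Real.exp y := Real.exp_pos y
      nlinarith [mul_nonneg (mul_nonneg hy0 hy0) h2.le,
        mul_nonneg (mul_nonneg (mul_nonneg hy0 hy0) hy0) h2.le]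
  have h0 : G 0 = 0 := by simp [hG]
  have := hmono (Set.self_mem_Ici) (Set.mem_Ici.mpr hx) hx
  rw [h0] at this
  simp only [hG] at this
  linarith

lemma aux_sinh_taylor {x : ℝ} (hx : 0 ≤ x) :
    Real.sinh x ≤ x + x^3/6 * Real.exp x := by
  set H : ℝ → ℝ := fun y => y + y^3/6 * Real.exp y - Real.sinh y with hH
  have hder : ∀ y : ℝ, HasDerivAt H
      (1 + (y^2/2 * Real.exp y + y^3/6 * Real.exp y) - Real.cosh y) y := by
    intro y
    have hp : HasDerivAt (fun y : ℝ => y^3/6) (y^2/2) y := by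
      have := (hasDerivAt_pow 3 y).div_const 6
      exact this.congr_deriv (by push_cast; ring)
    exact ((hasDerivAt_id y).add (hp.mul (Real.hasDerivAt_exp y))).sub
      (Real.hasDerivAt_sinh y)
  have hmono : MonotoneOn H (Set.Ici (0:ℝ)) := by
    apply monotoneOn_of_deriv_nonneg (convex_Ici 0)
    · exact Continuous.continuousOn (by fun_prop)
    · intro y hy
      exact (hder y).differentiableAt.differentiableWithinAt
    · intro y hy
      rw [interior_Ici] at hy
      rw [(hder y).deriv]
      have := aux_cosh_le (le_of_lt hy)
      linarith
  have h0 : H 0 = 0 := by simp [hH]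
  have := hmono (Set.self_mem_Ici) (Set.mem_Ici.mpr hx) hx
  rw [h0] at this
  simp only [hH] at this
  linarith

lemma aux_sinh_abs (t : ℝ) : |Real.sinh t - t| ≤ |t|^3/6 * Real.exp |t| := by
  rcases le_total 0 t with ht | ht
  · rw [abs_of_nonneg ht, abs_of_nonneg (by simpa using (Real.self_le_sinh_iff).mpr ht)]
    have := aux_sinh_taylor ht
    linarith
  · have ht' : 0 ≤ -t := by linarith
    rw [abs_of_nonpos ht]
    have h1 : Real.sinh t - t = -(Real.sinh (-t) - (-t)) := by
      rw [Real.sinh_neg]; ring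
    rw [h1, abs_neg, abs_of_nonneg (by simpa using (Real.self_le_sinh_iff).mpr ht')]
    have := aux_sinh_taylor ht'
    linarith

lemma lp_norm_le_mul {g f : lp (fun _ : ℕ => ℝ) 2} {K : ℝ} (hK : 0 ≤ K)
    (h : ∀ k, ‖g k‖ ≤ K * ‖f k‖) : ‖g‖ ≤ K * ‖f‖ := by
  have h2 : (0:ℝ) < (2 : ENNReal).toReal := by norm_num
  refine lp.norm_le_of_forall_sum_le h2 (mul_nonneg hK (norm_nonneg _)) ?_
  intro s
  have htwo : ((2 : ENNReal)).toReal = ((2:ℕ):ℝ) := by norm_num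
  simp_rw [htwo, Real.rpow_natCast]
  have hfs := lp.sum_rpow_le_norm_rpow h2 f s
  simp_rw [htwo, Real.rpow_natCast] at hfs
  calc ∑ i ∈ s, ‖g i‖ ^ 2 ≤ ∑ i ∈ s, (K * ‖f i‖) ^ 2 := by
        refine Finset.sum_le_sum fun i _ => ?_
        exact pow_le_pow_left₀ (norm_nonneg _) (h i) 2
    _ = K ^ 2 * ∑ i ∈ s, ‖f i‖ ^ 2 := by
        rw [Finset.mul_sum]; congr 1; ext i; ring
    _ ≤ K ^ 2 * ‖f‖ ^ 2 := by
        exact mul_le_mul_of_nonneg_left hfs (by positivity)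
    _ = (K * ‖f‖) ^ 2 := by ring

set_option maxHeartbeats 1000000 in
/-- Centered-difference approximation of `u¹(s)`: there exists `C > 0`, depending only on `λ₁`,
such that for all admissible `s` and `σ`,
`‖u¹(s) − (S(s+σ) − S(s−σ))/(2σ)‖ ≤ C σ² a⁻³ ‖f‖`. -/
theorem centered_difference_estimate (lam1 : ℝ) (hlam1 : 0 < lam1) :
    ∃ C : ℝ, 0 < C ∧
      ∀ (lam : ℕ → ℝ), (∀ k, lam1 ≤ lam k) →
      ∀ (f : lp (fun _ : ℕ => ℝ) 2) (S u1 : ℝ → lp (fun _ : ℕ => ℝ) 2),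
        (∀ s ∈ Set.Ioo (0 : ℝ) 1, ∀ k, S s k = lam k ^ (-s) * f k) →
        (∀ s ∈ Set.Ioo (0 : ℝ) 1, ∀ k,
          u1 s k = -(Real.log (lam k)) * lam k ^ (-s) * f k) →
      ∀ (a b : ℝ), 0 < a → a < b → b < 1 →
      ∀ s ∈ Set.Ioo a b, ∀ σ : ℝ, 0 < σ →
        s + σ ∈ Set.Ioo a b → s - σ ∈ Set.Ioo a b →
        ‖u1 s - (2 * σ)⁻¹ • (S (s + σ) - S (s - σ))‖ ≤ C * σ ^ 2 / a ^ 3 * ‖f‖ := by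
  set B : ℝ := |Real.log lam1| with hB
  refine ⟨1 + B ^ 3 * Real.exp B, by positivity, ?_⟩
  set C : ℝ := 1 + B ^ 3 * Real.exp B with hC
  intro lam hlam f S u1 hS hu1 a b ha hab hb1 s hs σ hσ hsp hsm
  have hC1 : (1:ℝ) ≤ C := by
    have hB0 : (0:ℝ) ≤ B ^ 3 * Real.exp B := by positivity
    rw [hC]; linarith
  have ha1 : a < 1 := lt_trans hab hb1
  have hs01 : s ∈ Set.Ioo (0:ℝ) 1 := ⟨lt_trans ha hs.1, lt_trans hs.2 hb1⟩
  have hsp01 : s + σ ∈ Set.Ioo (0:ℝ) 1 := ⟨lt_trans ha hsp.1, lt_trans hsp.2 hb1⟩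
  have hsm01 : s - σ ∈ Set.Ioo (0:ℝ) 1 := ⟨lt_trans ha hsm.1, lt_trans hsm.2 hb1⟩
  have hK : (0:ℝ) ≤ C * σ ^ 2 / a ^ 3 := by positivity
  apply lp_norm_le_mul hK
  intro k
  have hpos : (0:ℝ) < lam k := lt_of_lt_of_le hlam1 (hlam k)
  set L : ℝ := Real.log (lam k) with hL
  -- coordinates
  have hcoord : (u1 s - (2 * σ)⁻¹ • (S (s + σ) - S (s - σ))) k
      = u1 s k - (2 * σ)⁻¹ * (S (s + σ) k - S (s - σ) k) := by
    rfl
  have hsp' : lam k ^ (-(s + σ)) = Real.exp (-(s * L)) * Real.exp (-(σ * L)) := by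
    rw [Real.rpow_def_of_pos hpos, ← Real.exp_add, hL]; ring_nf
  have hsm' : lam k ^ (-(s - σ)) = Real.exp (-(s * L)) * Real.exp (σ * L) := by
    rw [Real.rpow_def_of_pos hpos, ← Real.exp_add, hL]; ring_nf
  have hs' : lam k ^ (-s) = Real.exp (-(s * L)) := by
    rw [Real.rpow_def_of_pos hpos, hL]; ring_nf
  have key : u1 s k - (2 * σ)⁻¹ * (S (s + σ) k - S (s - σ) k)
      = Real.exp (-(s * L)) * f k * (Real.sinh (σ * L) - σ * L) / σ := by
    rw [hu1 s hs01 k, hS _ hsp01 k, hS _ hsm01 k, hsp', hsm', hs', Real.sinh_eq]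
    field_simp
    ring
  rw [hcoord, key]
  -- now the scalar estimate
  have habs := aux_sinh_abs (σ * L)
  have hE : (0:ℝ) < Real.exp (-(s * L)) := Real.exp_pos _
  rw [Real.norm_eq_abs, Real.norm_eq_abs, abs_div, abs_of_pos hσ, abs_mul, abs_mul,
    abs_of_pos hE]
  have hcore : Real.exp (-(s * L)) * |Real.sinh (σ * L) - σ * L| / σ ≤ C * σ ^ 2 / a ^ 3 := by
    have h1 : |Real.sinh (σ * L) - σ * L| ≤ σ ^ 3 * |L| ^ 3 / 6 * Real.exp (σ * |L|) := by
      have : |σ * L| = σ * |L| := by rw [abs_mul, abs_of_pos hσ]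
      rw [this] at habs
      calc |Real.sinh (σ * L) - σ * L| ≤ (σ * |L|) ^ 3 / 6 * Real.exp (σ * |L|) := habs
        _ = σ ^ 3 * |L| ^ 3 / 6 * Real.exp (σ * |L|) := by ring
    have h2 : Real.exp (-(s * L)) * |Real.sinh (σ * L) - σ * L| / σ
        ≤ σ ^ 2 * (|L| ^ 3 / 6 * Real.exp (-(s * L) + σ * |L|)) := by
      rw [Real.exp_add]
      rw [div_le_iff₀ hσ]
      calc Real.exp (-(s * L)) * |Real.sinh (σ * L) - σ * L|
          ≤ Real.exp (-(s * L)) * (σ ^ 3 * |L| ^ 3 / 6 * Real.exp (σ * |L|)) :=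
            mul_le_mul_of_nonneg_left h1 hE.le
        _ = σ ^ 2 * (|L| ^ 3 / 6 * (Real.exp (-(s * L)) * Real.exp (σ * |L|))) * σ := by ring
    have h3 : |L| ^ 3 / 6 * Real.exp (-(s * L) + σ * |L|) ≤ C / a ^ 3 := by
      rcases le_or_gt 0 L with hL0 | hL0
      · -- L ≥ 0
        rw [abs_of_nonneg hL0]
        have hexp : -(s * L) + σ * L ≤ -(a * L) := by
          have h0 : (0:ℝ) ≤ (s - σ - a) * L := mul_nonneg (by linarith [hsm.1]) hL0
          nlinarith [h0]
        have hsum : (a * L) ^ 3 / 6 ≤ Real.exp (a * L) := by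
          have h4 := Real.sum_le_exp_of_nonneg (mul_nonneg ha.le hL0) 4
          have hy : (0:ℝ) ≤ a * L := mul_nonneg ha.le hL0
          norm_num [Finset.sum_range_succ, Nat.factorial] at h4
          linarith [sq_nonneg (a*L), hy]
        have hmono : L ^ 3 / 6 * Real.exp (-(s * L) + σ * L) ≤ L ^ 3 / 6 * Real.exp (-(a * L)) := by
          apply mul_le_mul_of_nonneg_left (Real.exp_le_exp.mpr hexp) (by positivity)
        refine le_trans hmono ?_
        have h5 : L ^ 3 / 6 ≤ Real.exp (a * L) / a ^ 3 := by
          rw [le_div_iff₀ (by positivity : (0:ℝ) < a ^ 3)]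
          nlinarith [hsum]
        have h6 : L ^ 3 / 6 * Real.exp (-(a * L)) ≤ 1 / a ^ 3 := by
          calc L ^ 3 / 6 * Real.exp (-(a * L))
              ≤ (Real.exp (a * L) / a ^ 3) * Real.exp (-(a * L)) :=
                mul_le_mul_of_nonneg_right h5 (Real.exp_pos _).le
            _ = Real.exp (a * L) * Real.exp (-(a * L)) / a ^ 3 := by ring
            _ = 1 / a ^ 3 := by rw [← Real.exp_add]; simp
        refine le_trans h6 ?_
        gcongr
      · -- L < 0
        have hlogle : Real.log lam1 ≤ L := Real.log_le_log hlam1 (hlam k)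
        have hLB : |L| ≤ B := by
          rw [abs_of_neg hL0, hB]
          have : -B ≤ Real.log lam1 := neg_abs_le _
          linarith
        have hLnn : (0:ℝ) ≤ |L| := abs_nonneg _
        have hLB' : -L ≤ B := by rwa [abs_of_neg hL0] at hLB
        have hexp : -(s * L) + σ * |L| ≤ B := by
          rw [abs_of_neg hL0]
          have h8 : (s + σ) * (-L) ≤ 1 * (-L) :=
            mul_le_mul_of_nonneg_right (by linarith [hsp.2]) (by linarith)
          nlinarith [h8]
        have hCa : C ≤ C / a ^ 3 := by
          rw [le_div_iff₀ (by positivity)]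
          have ha3 : a ^ 3 ≤ 1 := le_of_lt (pow_lt_one₀ ha.le ha1 (by norm_num))
          nlinarith [mul_le_mul_of_nonneg_left ha3 (by linarith : (0:ℝ) ≤ C)]
        refine le_trans ?_ hCa
        have hBe : (0:ℝ) ≤ Real.exp B := (Real.exp_pos _).le
        have := Real.exp_le_exp.mpr hexp
        calc |L| ^ 3 / 6 * Real.exp (-(s * L) + σ * |L|)
            ≤ B ^ 3 * Real.exp B := by
              have hB3 : |L| ^ 3 ≤ B ^ 3 := pow_le_pow_left₀ hLnn hLB 3
              have h7 : |L| ^ 3 / 6 ≤ B ^ 3 := by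
                have := pow_nonneg hLnn 3
                linarith
              exact mul_le_mul h7 (Real.exp_le_exp.mpr hexp) (Real.exp_pos _).le
                (by positivity)
          _ ≤ C := by rw [hC]; linarith
    calc Real.exp (-(s * L)) * |Real.sinh (σ * L) - σ * L| / σ
        ≤ σ ^ 2 * (|L| ^ 3 / 6 * Real.exp (-(s * L) + σ * |L|)) := h2
      _ ≤ σ ^ 2 * (C / a ^ 3) := mul_le_mul_of_nonneg_left h3 (by positivity)
      _ = C * σ ^ 2 / a ^ 3 := by ring
  calc Real.exp (-(s * L)) * |f k| * |Real.sinh (σ * L) - σ * L| / σ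
      = (Real.exp (-(s * L)) * |Real.sinh (σ * L) - σ * L| / σ) * |f k| := by ring
    _ ≤ (C * σ ^ 2 / a ^ 3) * |f k| :=
        mul_le_mul_of_nonneg_right hcore (abs_nonneg _)
end

section
/- Assume 0 < a < b < 1. Then for every sufficiently small σ > 0 there exist points s_l, s_r ∈ (a,b) with s_l < s_r, s_l ± σ ∈ (a,b) and s_r ± σ ∈ (a,b), such that j_σ(s_l) < 0 and j_σ(s_r) > 0. (Hence by the intermediate value theorem j_σ has a root s_σ ∈ (s_l, s_r).) -/
open Real Filter
open scoped RealInnerProductSpace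

lemma lp2_norm_le (x y : lp (fun _ : ℕ => ℝ) 2) (c : ℝ) (hc : 0 ≤ c)
    (h : ∀ k, ‖x k‖ ≤ c * ‖y k‖) : ‖x‖ ≤ c * ‖y‖ := by
  have hp : (0:ℝ) < (2 : ENNReal).toReal := by norm_num
  rw [← Real.rpow_le_rpow_iff (lp.norm_nonneg' x) (mul_nonneg hc (lp.norm_nonneg' y)) hp]
  rw [lp.norm_rpow_eq_tsum hp x, Real.mul_rpow hc (lp.norm_nonneg' y),
    lp.norm_rpow_eq_tsum hp y, ← tsum_mul_left]
  apply Summable.tsum_le_tsum _ ((lp.memℓp x).summable hp)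
  · have : Summable fun k => (c * ‖y k‖) ^ (2 : ENNReal).toReal := by
      simp_rw [Real.mul_rpow hc (norm_nonneg _)]
      exact ((lp.memℓp y).summable hp).mul_left _
    apply this.congr
    intro k
    rw [Real.mul_rpow hc (norm_nonneg _)]
  · intro k
    calc ‖x k‖ ^ (2 : ENNReal).toReal ≤ (c * ‖y k‖) ^ (2 : ENNReal).toReal :=
          Real.rpow_le_rpow (norm_nonneg _) (h k) hp.le
      _ = c ^ (2 : ENNReal).toReal * ‖y k‖ ^ (2 : ENNReal).toReal :=
          Real.mul_rpow hc (norm_nonneg _)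

lemma rpow_diff_bound {lam1 x aa u v : ℝ} (hlam1 : 0 < lam1) (hx : lam1 ≤ x)
    (ha : 0 < aa) (hu : aa ≤ u) (huv : u ≤ v) (hv : v ≤ 1) :
    |x ^ (-v) - x ^ (-u)| ≤ (v - u) * (aa⁻¹ + |Real.log lam1| * lam1⁻¹) := by
  have hx0 : 0 < x := hlam1.trans_le hx
  have hvu : (0:ℝ) ≤ v - u := by linarith
  have hterm : 0 ≤ |Real.log lam1| * lam1⁻¹ := by positivity
  rcases le_or_gt 1 x with h1 | h1
  · have hle : x ^ (-v) ≤ x ^ (-u) := Real.rpow_le_rpow_of_exponent_le h1 (by linarith)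
    rw [abs_of_nonpos (by linarith), neg_sub]
    have e1 : x ^ (-v) = x ^ (-u) * x ^ (u - v) := by
      rw [← Real.rpow_add hx0]; ring_nf
    have e2 : x ^ (u - v) = Real.exp ((u - v) * Real.log x) := by
      rw [Real.rpow_def_of_pos hx0, mul_comm]
    have e3 : 1 - x ^ (u - v) ≤ (v - u) * Real.log x := by
      have := Real.add_one_le_exp ((u - v) * Real.log x)
      rw [e2]; nlinarith
    have hlog : Real.log x ≤ x ^ aa * aa⁻¹ := by
      have h4 := Real.log_le_sub_one_of_pos (Real.rpow_pos_of_pos hx0 aa)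
      rw [Real.log_rpow hx0] at h4
      rw [mul_comm (x ^ aa) aa⁻¹, ← div_eq_inv_mul]
      rw [le_div_iff₀ ha]
      nlinarith
    have hxu : x ^ (-u) * Real.log x ≤ aa⁻¹ := by
      have h4 : x ^ (-u) * x ^ aa = x ^ (aa - u) := by rw [← Real.rpow_add hx0]; ring_nf
      have h5 : x ^ (aa - u) ≤ 1 := Real.rpow_le_one_of_one_le_of_nonpos h1 (by linarith)
      calc x ^ (-u) * Real.log x ≤ x ^ (-u) * (x ^ aa * aa⁻¹) :=
            mul_le_mul_of_nonneg_left hlog (Real.rpow_nonneg hx0.le _)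
        _ = (x ^ (-u) * x ^ aa) * aa⁻¹ := by ring
        _ ≤ 1 * aa⁻¹ := by
            apply mul_le_mul_of_nonneg_right _ (inv_nonneg.mpr ha.le)
            rw [h4]; exact h5
        _ = aa⁻¹ := one_mul _
    nlinarith [mul_le_mul_of_nonneg_left e3 (Real.rpow_nonneg hx0.le (-u)),
      mul_le_mul_of_nonneg_left hxu hvu, mul_nonneg hvu hterm]
  · have hle : x ^ (-u) ≤ x ^ (-v) :=
      Real.rpow_le_rpow_of_exponent_ge hx0 h1.le (by linarith)
    rw [abs_of_nonneg (by linarith)]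
    have e1 : x ^ (-u) = x ^ (-v) * x ^ (v - u) := by
      rw [← Real.rpow_add hx0]; ring_nf
    have e2 : x ^ (v - u) = Real.exp ((v - u) * Real.log x) := by
      rw [Real.rpow_def_of_pos hx0, mul_comm]
    have e3 : 1 - x ^ (v - u) ≤ (v - u) * (-Real.log x) := by
      have := Real.add_one_le_exp ((v - u) * Real.log x)
      rw [e2]; nlinarith
    have hlogneg : Real.log x < 0 := Real.log_neg hx0 h1
    have hlogx : -Real.log x ≤ |Real.log lam1| := by
      have := Real.log_le_log hlam1 hx
      have := neg_le_abs (Real.log lam1)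
      linarith
    have hxv : x ^ (-v) ≤ lam1⁻¹ := by
      have h4 : x ^ (-v) ≤ x ^ (-1 : ℝ) :=
        Real.rpow_le_rpow_of_exponent_ge hx0 h1.le (by linarith)
      rw [Real.rpow_neg_one] at h4
      exact h4.trans (by gcongr)
    have step1 : x ^ (-v) - x ^ (-u) ≤ x ^ (-v) * ((v - u) * (-Real.log x)) := by
      nlinarith [mul_le_mul_of_nonneg_left e3 (Real.rpow_nonneg hx0.le (-v))]
    have step2 : x ^ (-v) * ((v - u) * (-Real.log x)) ≤ lam1⁻¹ * ((v - u) * |Real.log lam1|) := by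
      apply mul_le_mul hxv (mul_le_mul_of_nonneg_left hlogx hvu)
        (mul_nonneg hvu (by linarith)) (inv_nonneg.mpr hlam1.le)
    have haainv : 0 ≤ aa⁻¹ := inv_nonneg.mpr ha.le
    nlinarith [mul_nonneg hvu haainv]

/-- Root isolation for the bisection algorithm: for every sufficiently small `σ > 0` there are
points `s_l < s_r` in `(a,b)`, admissible for the centered difference, with `j_σ(s_l) < 0` and
`j_σ(s_r) > 0`, where `j_σ(s) = ⟨S(s) − u_d, (S(s+σ) − S(s−σ))/(2σ)⟩ + φ'(s)`. -/
theorem root_isolation (lam1 : ℝ) (hlam1 : 0 < lam1) (lam : ℕ → ℝ)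
    (hlam : ∀ k, lam1 ≤ lam k) (f : lp (fun _ : ℕ => ℝ) 2)
    (S : ℝ → lp (fun _ : ℕ => ℝ) 2)
    (hS : ∀ s ∈ Set.Ioo (0 : ℝ) 1, ∀ k, S s k = lam k ^ (-s) * f k)
    (ud : lp (fun _ : ℕ => ℝ) 2)
    (a b : ℝ) (ha : 0 < a) (hab : a < b) (hb : b < 1)
    (φ φ' : ℝ → ℝ) (hφ0 : ∀ s ∈ Set.Ioo a b, 0 ≤ φ s)
    (hφconv : ConvexOn ℝ (Set.Ioo a b) φ)
    (hφd : ∀ s ∈ Set.Ioo a b, HasDerivAt φ (φ' s) s)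
    (hφdc : ContinuousOn φ' (Set.Ioo a b))
    (hφa : Tendsto φ (nhdsWithin a (Set.Ioi a)) atTop)
    (hφb : Tendsto φ (nhdsWithin b (Set.Iio b)) atTop) :
    ∃ σ₀ > 0, ∀ σ : ℝ, 0 < σ → σ < σ₀ →
      ∃ sl ∈ Set.Ioo a b, ∃ sr ∈ Set.Ioo a b, sl < sr ∧
        sl + σ ∈ Set.Ioo a b ∧ sl - σ ∈ Set.Ioo a b ∧
        sr + σ ∈ Set.Ioo a b ∧ sr - σ ∈ Set.Ioo a b ∧
        ⟪S sl - ud, (2 * σ)⁻¹ • (S (sl + σ) - S (sl - σ))⟫ + φ' sl < 0 ∧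
        0 < ⟪S sr - ud, (2 * σ)⁻¹ • (S (sr + σ) - S (sr - σ))⟫ + φ' sr := by
  set C : ℝ := max 1 lam1⁻¹ with hCdef
  set L : ℝ := a⁻¹ + |Real.log lam1| * lam1⁻¹ with hLdef
  set M : ℝ := (C * ‖f‖ + ‖ud‖) * (L * ‖f‖) with hMdef
  have hC0 : (0:ℝ) ≤ C := zero_le_one.trans (le_max_left _ _)
  have hL0 : (0:ℝ) ≤ L := by positivity
  have hM0 : (0:ℝ) ≤ M := by
    apply mul_nonneg (add_nonneg (mul_nonneg hC0 (norm_nonneg _)) (norm_nonneg _))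
      (mul_nonneg hL0 (norm_nonneg _))
  have hsub : ∀ {r : ℝ}, r ∈ Set.Ioo a b → r ∈ Set.Ioo (0:ℝ) 1 :=
    fun hr => ⟨ha.trans hr.1, hr.2.trans hb⟩
  -- uniform bound on ‖S s‖
  have hSnorm : ∀ s ∈ Set.Ioo (0:ℝ) 1, ‖S s‖ ≤ C * ‖f‖ := by
    intro s hs
    apply lp2_norm_le _ _ _ hC0
    intro k
    have hk0 : (0:ℝ) < lam k := hlam1.trans_le (hlam k)
    rw [hS s hs k, Real.norm_eq_abs, Real.norm_eq_abs, abs_mul]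
    apply mul_le_mul_of_nonneg_right _ (abs_nonneg _)
    rw [abs_of_nonneg (Real.rpow_nonneg hk0.le _)]
    rcases le_or_gt 1 (lam k) with h1 | h1
    · exact (Real.rpow_le_one_of_one_le_of_nonpos h1 (neg_nonpos.mpr hs.1.le)).trans
        (le_max_left _ _)
    · have h2 : lam k ^ (-s) ≤ lam k ^ (-1 : ℝ) :=
        Real.rpow_le_rpow_of_exponent_ge hk0 h1.le (by linarith [hs.2])
      rw [Real.rpow_neg_one] at h2
      refine h2.trans (le_trans (by gcongr; exact hlam k) (le_max_right _ _))
  -- choose left and right test points via convexity and blow-up of φ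
  set t : ℝ := (a + b) / 2 with htdef
  have hat : a < t := by simp only [htdef]; linarith
  have htb : t < b := by simp only [htdef]; linarith
  have htI : t ∈ Set.Ioo a b := ⟨hat, htb⟩
  obtain ⟨sr, hsrI, hsrt, hsr⟩ : ∃ sr ∈ Set.Ioo a b, t < sr ∧ M < φ' sr := by
    have hmem : ∀ᶠ s in nhdsWithin b (Set.Iio b), s ∈ Set.Ioo t b :=
      Filter.eventually_of_mem (Ioo_mem_nhdsLT_of_mem ⟨htb, le_refl b⟩) fun s hs => hs
    obtain ⟨s, hge, hs⟩ :=
      ((hφb.eventually_ge_atTop (φ t + M * (b - t) + 1)).and hmem).exists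
    have hsI : s ∈ Set.Ioo a b := ⟨hat.trans hs.1, hs.2⟩
    refine ⟨s, hsI, hs.1, ?_⟩
    have hslope := hφconv.slope_le_of_hasDerivAt htI hsI hs.1 (hφd s hsI)
    rw [slope_def_field] at hslope
    have hst : (0:ℝ) < s - t := by linarith [hs.1]
    have h2 : M * (s - t) < φ s - φ t := by
      nlinarith [mul_le_mul_of_nonneg_left (show s - t ≤ b - t by linarith [hs.2]) hM0]
    have h3 := (lt_div_iff₀ hst).mpr h2
    linarith
  obtain ⟨sl, hslI, hslt, hsl⟩ : ∃ sl ∈ Set.Ioo a b, sl < t ∧ φ' sl < -M := by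
    have hmem : ∀ᶠ s in nhdsWithin a (Set.Ioi a), s ∈ Set.Ioo a t :=
      Filter.eventually_of_mem (Ioo_mem_nhdsGT_of_mem ⟨le_refl a, hat⟩) fun s hs => hs
    obtain ⟨s, hge, hs⟩ :=
      ((hφa.eventually_ge_atTop (φ t + M * (t - a) + 1)).and hmem).exists
    have hsI : s ∈ Set.Ioo a b := ⟨hs.1, hs.2.trans htb⟩
    refine ⟨s, hsI, hs.2, ?_⟩
    have hslope := hφconv.le_slope_of_hasDerivAt hsI htI hs.2 (hφd s hsI)
    rw [slope_def_field] at hslope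
    have hst : (0:ℝ) < t - s := by linarith [hs.2]
    have h2 : φ t - φ s < -M * (t - s) := by
      nlinarith [mul_le_mul_of_nonneg_left (show t - s ≤ t - a by linarith [hs.1]) hM0]
    have h3 := (div_lt_iff₀ hst).mpr h2
    linarith
  have hslr : sl < sr := hslt.trans hsrt
  refine ⟨min (sl - a) (b - sr), by
    apply lt_min <;> linarith [hslI.1, hsrI.2], fun σ hσ0 hσ => ?_⟩
  have hσ1 : σ < sl - a := hσ.trans_le (min_le_left _ _)
  have hσ2 : σ < b - sr := hσ.trans_le (min_le_right _ _)
  have hslp : sl + σ ∈ Set.Ioo a b := ⟨by linarith [hslI.1], by linarith⟩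
  have hslm : sl - σ ∈ Set.Ioo a b := ⟨by linarith, by linarith [hslI.2]⟩
  have hsrp : sr + σ ∈ Set.Ioo a b := ⟨by linarith [hsrI.1], by linarith⟩
  have hsrm : sr - σ ∈ Set.Ioo a b := ⟨by linarith, by linarith [hsrI.2]⟩
  -- uniform bound on the inner product term
  have key : ∀ s ∈ Set.Ioo a b, s + σ ∈ Set.Ioo a b → s - σ ∈ Set.Ioo a b →
      |⟪S s - ud, (2 * σ)⁻¹ • (S (s + σ) - S (s - σ))⟫| ≤ M := by
    intro s hs hsp hsm
    have hn1 : ‖S s - ud‖ ≤ C * ‖f‖ + ‖ud‖ :=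
      (norm_sub_le _ _).trans (add_le_add_left (hSnorm s (hsub hs)) _)
    have hdiff : ‖S (s + σ) - S (s - σ)‖ ≤ (2 * σ * L) * ‖f‖ := by
      apply lp2_norm_le _ _ _ (by positivity)
      intro k
      have hk0 : (0:ℝ) < lam k := hlam1.trans_le (hlam k)
      have hcoord : (S (s + σ) - S (s - σ)) k = S (s + σ) k - S (s - σ) k := by
        rw [lp.coeFn_sub]; rfl
      rw [hcoord, hS _ (hsub hsp) k, hS _ (hsub hsm) k, Real.norm_eq_abs, Real.norm_eq_abs,
        ← sub_mul, abs_mul]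
      apply mul_le_mul_of_nonneg_right _ (abs_nonneg _)
      have hbd := rpow_diff_bound hlam1 (hlam k) ha (le_of_lt hsm.1) (by linarith : s - σ ≤ s + σ)
        (le_of_lt (hsp.2.trans hb))
      have h2σ : (s + σ) - (s - σ) = 2 * σ := by ring
      rw [h2σ] at hbd
      exact hbd
    have hsm2 : ‖(2 * σ)⁻¹ • (S (s + σ) - S (s - σ))‖ ≤ L * ‖f‖ := by
      rw [norm_smul, Real.norm_eq_abs, abs_of_pos (by positivity : (0:ℝ) < (2 * σ)⁻¹)]
      have h5 : (2 * σ)⁻¹ * ‖S (s + σ) - S (s - σ)‖ ≤ (2 * σ)⁻¹ * ((2 * σ * L) * ‖f‖) :=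
        mul_le_mul_of_nonneg_left hdiff (by positivity)
      have h6 : (2 * σ)⁻¹ * ((2 * σ * L) * ‖f‖) = L * ‖f‖ := by field_simp
      linarith
    exact (abs_real_inner_le_norm _ _).trans
      (mul_le_mul hn1 hsm2 (norm_nonneg _) (by positivity))
  refine ⟨sl, hslI, sr, hsrI, hslr, hslp, hslm, hsrp, hsrm, ?_, ?_⟩
  · have h := abs_le.mp (key sl hslI hslp hslm)
    linarith [h.2]
  · have h := abs_le.mp (key sr hsrI hsrp hsrm)
    linarith [h.1]
end

section
/- Assume 0 < a < b < 1. There exists a constant C > 0, depending only on λ₁, ‖f‖ and ‖u_d‖, such that for every σ > 0 and every s ∈ (a,b) with s ± σ ∈ (a,b), one has |F'(s) − j_σ(s)| ≤ C · σ² · a^{-3}, where F'(s) = ⟨S(s) − u_d, u^{(1)}(s)⟩ + φ'(s) is the derivative of the reduced cost functional. In particular, j_σ converges uniformly to F' as σ → 0. -/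
open Real Filter
open scoped RealInnerProductSpace ENNReal

lemma cube_le_exp {z : ℝ} (hz : 0 ≤ z) : z ^ 3 ≤ 27 * Real.exp z := by
  have h := Real.add_one_le_exp (z / 3)
  have h3 : z / 3 ≤ Real.exp (z / 3) := by linarith
  have hpos : (0:ℝ) ≤ z / 3 := by linarith
  have := pow_le_pow_left₀ hpos h3 3
  have hexp : Real.exp (z / 3) ^ 3 = Real.exp z := by
    rw [← Real.exp_nat_mul]; ring_nf
  nlinarith [Real.exp_pos z]

lemma cosh_sub_one_le {t : ℝ} (ht : 0 ≤ t) : Real.cosh t - 1 ≤ t ^ 2 / 2 * Real.exp t := by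
  have hEF : Real.exp t * Real.exp (-t) = 1 := by
    rw [← Real.exp_add]; simp
  have hF : 1 - t ≤ Real.exp (-t) := by have := Real.add_one_le_exp (-t); linarith
  have hE : 1 + t ≤ Real.exp t := by have := Real.add_one_le_exp t; linarith
  have hFpos := Real.exp_pos (-t)
  have hEpos := Real.exp_pos t
  rw [Real.cosh_eq]
  nlinarith [sq_nonneg (Real.exp t - 1), mul_nonneg ht hEpos.le,
    mul_le_mul_of_nonneg_left hF hEpos.le]

lemma sinh_sub_self_le {t : ℝ} (ht : 0 ≤ t) :
    Real.sinh t - t ≤ t ^ 3 / 6 * Real.exp t := by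
  set g : ℝ → ℝ := fun t => t ^ 3 / 6 * Real.exp t - Real.sinh t + t with hg
  have hd : ∀ x : ℝ, HasDerivAt g
      (x ^ 2 / 2 * Real.exp x + x ^ 3 / 6 * Real.exp x - Real.cosh x + 1) x := by
    intro x
    have h1 : HasDerivAt (fun x : ℝ => x ^ 3 / 6 * Real.exp x)
        (3 * x ^ 2 / 6 * Real.exp x + x ^ 3 / 6 * Real.exp x) x := by
      have := ((hasDerivAt_pow 3 x).div_const 6).fun_mul (Real.hasDerivAt_exp x)
      exact this.congr_deriv (by norm_num)
    have h2 := (h1.fun_sub (Real.hasDerivAt_sinh x)).fun_add (hasDerivAt_id x)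
    exact h2.congr_deriv (by ring)
  have hmono : MonotoneOn g (Set.Ici (0:ℝ)) := by
    apply monotoneOn_of_deriv_nonneg (convex_Ici 0)
    · exact fun x _ => ((hd x).continuousAt).continuousWithinAt
    · exact fun x _ => ((hd x).differentiableAt).differentiableWithinAt
    · intro x hx
      rw [interior_Ici] at hx
      rw [(hd x).deriv]
      have hx0 : (0:ℝ) ≤ x := le_of_lt hx
      have := cosh_sub_one_le hx0
      have h3 : 0 ≤ x ^ 3 / 6 * Real.exp x :=
        mul_nonneg (by positivity) (Real.exp_pos x).le
      linarith
  have h0 : g 0 = 0 := by simp [hg]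
  have h1 := hmono (Set.self_mem_Ici) (Set.mem_Ici.mpr ht) ht
  rw [h0] at h1
  have : 0 ≤ t ^ 3 / 6 * Real.exp t - Real.sinh t + t := h1
  linarith

lemma abs_sinh_sub_self_le (t : ℝ) :
    |Real.sinh t - t| ≤ |t| ^ 3 / 6 * Real.exp |t| := by
  rcases le_or_gt 0 t with h | h
  · have hs : t ≤ Real.sinh t := Real.self_le_sinh_iff.mpr h
    rw [abs_of_nonneg h, abs_of_nonneg (by linarith)]
    exact sinh_sub_self_le h
  · have h' : 0 ≤ -t := by linarith
    have hs : -t ≤ Real.sinh (-t) := Real.self_le_sinh_iff.mpr h'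
    rw [Real.sinh_neg] at hs
    rw [abs_of_neg h, abs_of_nonpos (by linarith)]
    have := sinh_sub_self_le h'
    rw [Real.sinh_neg] at this
    linarith

lemma lp_norm_le_of_le (x y : lp (fun _ : ℕ => ℝ) 2) (c : ℝ) (hc : 0 ≤ c)
    (h : ∀ k, |x k| ≤ c * |y k|) : ‖x‖ ≤ c * ‖y‖ := by
  have hp : 0 < (2 : ℝ≥0∞).toReal := by norm_num
  refine lp.norm_le_of_forall_sum_le hp (mul_nonneg hc (norm_nonneg _)) (fun s => ?_)
  have hy := lp.sum_rpow_le_norm_rpow hp y s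
  have h2 : ((2:ℝ≥0∞)).toReal = ((2:ℕ):ℝ) := by norm_num
  simp only [h2, Real.rpow_natCast] at hy ⊢
  calc ∑ i ∈ s, ‖x i‖ ^ 2 ≤ ∑ i ∈ s, (c * ‖y i‖) ^ 2 := by
        refine Finset.sum_le_sum fun i _ => pow_le_pow_left₀ (norm_nonneg _) ?_ 2
        simpa [Real.norm_eq_abs] using h i
    _ = c ^ 2 * ∑ i ∈ s, ‖y i‖ ^ 2 := by rw [Finset.mul_sum]; congr 1; ext i; ring
    _ ≤ c ^ 2 * ‖y‖ ^ 2 := by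
        exact mul_le_mul_of_nonneg_left hy (sq_nonneg c)
    _ = (c * ‖y‖) ^ 2 := by ring

set_option maxHeartbeats 1000000 in
/-- Uniform convergence of `j_σ` to `F'`: there is `C > 0`, depending only on `λ₁`, `‖f‖` and
`‖u_d‖`, such that `|F'(s) − j_σ(s)| ≤ C σ² a⁻³` for all admissible `s`, `σ`, where
`F'(s) = ⟨S(s) − u_d, u¹(s)⟩ + φ'(s)` and
`j_σ(s) = ⟨S(s) − u_d, (S(s+σ) − S(s−σ))/(2σ)⟩ + φ'(s)`. -/
theorem jsigma_uniform_convergence (lam1 : ℝ) (hlam1 : 0 < lam1) (lam : ℕ → ℝ)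
    (hlam : ∀ k, lam1 ≤ lam k) (f : lp (fun _ : ℕ => ℝ) 2)
    (S u1 : ℝ → lp (fun _ : ℕ => ℝ) 2)
    (hS : ∀ s ∈ Set.Ioo (0 : ℝ) 1, ∀ k, S s k = lam k ^ (-s) * f k)
    (hu1 : ∀ s ∈ Set.Ioo (0 : ℝ) 1, ∀ k,
      u1 s k = -(Real.log (lam k)) * lam k ^ (-s) * f k)
    (ud : lp (fun _ : ℕ => ℝ) 2)
    (a b : ℝ) (ha : 0 < a) (hab : a < b) (hb : b < 1)
    (φ φ' : ℝ → ℝ) (hφ0 : ∀ s ∈ Set.Ioo a b, 0 ≤ φ s)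
    (hφconv : ConvexOn ℝ (Set.Ioo a b) φ)
    (hφd : ∀ s ∈ Set.Ioo a b, HasDerivAt φ (φ' s) s)
    (hφa : Tendsto φ (nhdsWithin a (Set.Ioi a)) atTop)
    (hφb : Tendsto φ (nhdsWithin b (Set.Iio b)) atTop) :
    ∃ C : ℝ, 0 < C ∧
      ∀ σ : ℝ, 0 < σ → ∀ s ∈ Set.Ioo a b,
        s + σ ∈ Set.Ioo a b → s - σ ∈ Set.Ioo a b →
        |(⟪S s - ud, u1 s⟫ + φ' s) -
            (⟪S s - ud, (2 * σ)⁻¹ • (S (s + σ) - S (s - σ))⟫ + φ' s)| ≤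
          C * σ ^ 2 / a ^ 3 := by
  set K : ℝ := lam1⁻¹ * |Real.log lam1| ^ 3 with hKdef
  have hK : 0 ≤ K := mul_nonneg (inv_nonneg.mpr hlam1.le) (by positivity)
  set Cf : ℝ := max 1 lam1⁻¹ with hCfdef
  have hCf1 : (1:ℝ) ≤ Cf := le_max_left _ _
  refine ⟨(Cf * ‖f‖ + ‖ud‖) * ((27 + K) / 6) * ‖f‖ + 1, by positivity, ?_⟩
  intro σ hσ s hs hsp hsm
  have ha3 : (0:ℝ) < a ^ 3 := by positivity
  have hs01 : s ∈ Set.Ioo (0:ℝ) 1 := ⟨by rcases hs with ⟨h1,h2⟩; linarith, by rcases hs with ⟨h1,h2⟩; linarith⟩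
  have hsp01 : s + σ ∈ Set.Ioo (0:ℝ) 1 := ⟨by rcases hsp with ⟨h1,h2⟩; linarith, by rcases hsp with ⟨h1,h2⟩; linarith⟩
  have hsm01 : s - σ ∈ Set.Ioo (0:ℝ) 1 := ⟨by rcases hsm with ⟨h1,h2⟩; linarith, by rcases hsm with ⟨h1,h2⟩; linarith⟩
  set v : lp (fun _ : ℕ => ℝ) 2 := S s - ud with hvdef
  set w : lp (fun _ : ℕ => ℝ) 2 := u1 s - (2 * σ)⁻¹ • (S (s + σ) - S (s - σ)) with hwdef
  -- step 1: rewrite the LHS as an inner product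
  have hdiff : (⟪S s - ud, u1 s⟫ + φ' s) -
      (⟪S s - ud, (2 * σ)⁻¹ • (S (s + σ) - S (s - σ))⟫ + φ' s) = ⟪v, w⟫ := by
    rw [hwdef, inner_sub_right]; ring
  rw [hdiff]
  -- step 2: coordinatewise bound on w
  have hcoord : ∀ k, |w k| ≤ σ ^ 2 / 6 * ((27 + K) / a ^ 3) * |f k| := by
    intro k
    set L : ℝ := lam k with hLdef
    have hL : 0 < L := lt_of_lt_of_le hlam1 (hlam k)
    set x : ℝ := Real.log L with hxdef
    have hpow : ∀ y : ℝ, L ^ y = Real.exp (x * y) := fun y => Real.rpow_def_of_pos hL y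
    have hwk : w k = (Real.sinh (σ * x) - σ * x) / σ * Real.exp (x * (-s)) * f k := by
      have h0 : w k = u1 s k - (2 * σ)⁻¹ * (S (s + σ) k - S (s - σ) k) := by
        rw [hwdef]
        simp [lp.coeFn_sub, lp.coeFn_smul, Pi.sub_apply, Pi.smul_apply, smul_eq_mul]
        rfl
      rw [h0, hu1 s hs01 k, hS (s + σ) hsp01 k, hS (s - σ) hsm01 k,
        hpow, hpow, hpow]
      have e1 : Real.exp (x * (-(s + σ))) = Real.exp (x * (-s)) * Real.exp (-(σ * x)) := by
        rw [← Real.exp_add]; ring_nf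
      have e2 : Real.exp (x * (-(s - σ))) = Real.exp (x * (-s)) * Real.exp (σ * x) := by
        rw [← Real.exp_add]; ring_nf
      rw [e1, e2, Real.sinh_eq]
      field_simp
      ring
    -- key exponential bound
    have hQ : |x| ^ 3 * (Real.exp (x * (-s)) * Real.exp (σ * |x|)) ≤ (27 + K) / a ^ 3 := by
      rcases le_or_gt 0 x with hx | hx
      · -- x ≥ 0
        have key : x ^ 3 * Real.exp (-(a * x)) ≤ 27 / a ^ 3 := by
          rw [le_div_iff₀ ha3, ← mul_le_mul_iff_of_pos_right (Real.exp_pos (a * x))]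
          have hid : x ^ 3 * Real.exp (-(a * x)) * a ^ 3 * Real.exp (a * x) = (a * x) ^ 3 := by
            rw [Real.exp_neg]
            field_simp
          rw [hid]
          exact cube_le_exp (mul_nonneg ha.le hx)
        have hmono : Real.exp (x * (-s)) * Real.exp (σ * |x|) ≤ Real.exp (-(a * x)) := by
          rw [abs_of_nonneg hx, ← Real.exp_add, Real.exp_le_exp]
          have hcross : 0 ≤ x * (s - σ - a) :=
            mul_nonneg hx (by rcases hsm with ⟨h1, _⟩; linarith)
          nlinarith
        calc |x| ^ 3 * (Real.exp (x * (-s)) * Real.exp (σ * |x|))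
            ≤ |x| ^ 3 * Real.exp (-(a * x)) := by
              exact mul_le_mul_of_nonneg_left hmono (by positivity)
          _ = x ^ 3 * Real.exp (-(a * x)) := by rw [abs_of_nonneg hx]
          _ ≤ 27 / a ^ 3 := key
          _ ≤ (27 + K) / a ^ 3 := by gcongr; linarith
      · -- x < 0
        have hxn : 0 ≤ -x := by linarith
        have hlog : Real.log lam1 ≤ x := Real.log_le_log hlam1 (hlam k)
        have hlogneg : Real.log lam1 < 0 := lt_of_le_of_lt hlog hx
        have hcube : |x| ^ 3 ≤ |Real.log lam1| ^ 3 := by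
          rw [abs_of_neg hx, abs_of_neg hlogneg]
          exact pow_le_pow_left₀ hxn (by linarith) 3
        have hexp : Real.exp (x * (-s)) * Real.exp (σ * |x|) ≤ lam1⁻¹ := by
          rw [abs_of_neg hx, ← Real.exp_add]
          have hstep : Real.exp (x * (-s) + σ * -x) ≤ Real.exp (-x) := by
            rw [Real.exp_le_exp]
            have hcross : 0 ≤ -x * (1 - s - σ) :=
              mul_nonneg hxn (by rcases hsp with ⟨_, h2⟩; linarith)
            nlinarith
          refine hstep.trans ?_
          rw [Real.exp_neg, hxdef, Real.exp_log hL]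
          exact inv_anti₀ hlam1 (hlam k)
        have : |x| ^ 3 * (Real.exp (x * (-s)) * Real.exp (σ * |x|)) ≤
            |Real.log lam1| ^ 3 * lam1⁻¹ := by
          apply mul_le_mul hcube hexp (by positivity) (by positivity)
        refine this.trans ?_
        rw [le_div_iff₀ ha3]
        have ha1 : a ^ 3 ≤ 1 := pow_le_one₀ ha.le (by linarith)
        have hKeq : |Real.log lam1| ^ 3 * lam1⁻¹ = K := by rw [hKdef]; ring
        rw [hKeq]
        calc K * a ^ 3 ≤ K * 1 := by gcongr
          _ ≤ 27 + K := by linarith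
      -- end cases
    have h1 : |Real.sinh (σ * x) - σ * x| ≤ σ ^ 3 * |x| ^ 3 / 6 * Real.exp (σ * |x|) := by
      have h := abs_sinh_sub_self_le (σ * x)
      rwa [abs_mul, abs_of_pos hσ, mul_pow] at h
    have h2 : |w k| = |Real.sinh (σ * x) - σ * x| / σ * Real.exp (x * (-s)) * |f k| := by
      rw [hwk, abs_mul, abs_mul, abs_div, abs_of_pos hσ, Real.abs_exp]
    rw [h2]
    calc |Real.sinh (σ * x) - σ * x| / σ * Real.exp (x * (-s)) * |f k|
        ≤ (σ ^ 3 * |x| ^ 3 / 6 * Real.exp (σ * |x|)) / σ * Real.exp (x * (-s)) * |f k| := by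
          gcongr
      _ = σ ^ 2 / 6 * (|x| ^ 3 * (Real.exp (x * (-s)) * Real.exp (σ * |x|))) * |f k| := by
          field_simp
      _ ≤ σ ^ 2 / 6 * ((27 + K) / a ^ 3) * |f k| := by gcongr
  -- step 3: norm bounds
  have hw : ‖w‖ ≤ σ ^ 2 / 6 * ((27 + K) / a ^ 3) * ‖f‖ :=
    lp_norm_le_of_le w f _ (by positivity) hcoord
  have hSnorm : ‖S s‖ ≤ Cf * ‖f‖ := by
    apply lp_norm_le_of_le _ _ _ (by positivity)
    intro k
    have hL : 0 < lam k := lt_of_lt_of_le hlam1 (hlam k)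
    rw [hS s hs01 k, abs_mul, abs_of_pos (Real.rpow_pos_of_pos hL _)]
    apply mul_le_mul_of_nonneg_right ?_ (abs_nonneg _)
    rcases le_or_gt 1 (lam k) with hL1 | hL1
    · exact le_trans (Real.rpow_le_one_of_one_le_of_nonpos hL1
        (by rcases hs01 with ⟨h1, _⟩; linarith)) hCf1
    · have := Real.rpow_le_rpow_of_exponent_ge hL hL1.le
        (show (-1:ℝ) ≤ -s by rcases hs01 with ⟨_, h2⟩; linarith)
      rw [Real.rpow_neg_one] at this
      refine this.trans ((inv_anti₀ hlam1 (hlam k)).trans (le_max_right _ _))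
  have hv : ‖v‖ ≤ Cf * ‖f‖ + ‖ud‖ := (norm_sub_le _ _).trans (by linarith)
  -- step 4: conclude
  have hcs := abs_real_inner_le_norm v w
  have hbound : ‖v‖ * ‖w‖ ≤ (Cf * ‖f‖ + ‖ud‖) * (σ ^ 2 / 6 * ((27 + K) / a ^ 3) * ‖f‖) := by
    apply mul_le_mul hv hw (norm_nonneg _) (by positivity)
  have heq : (Cf * ‖f‖ + ‖ud‖) * (σ ^ 2 / 6 * ((27 + K) / a ^ 3) * ‖f‖) =
      ((Cf * ‖f‖ + ‖ud‖) * ((27 + K) / 6) * ‖f‖) * σ ^ 2 / a ^ 3 := by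
    field_simp
  have hfinal : ((Cf * ‖f‖ + ‖ud‖) * ((27 + K) / 6) * ‖f‖) * σ ^ 2 / a ^ 3 ≤
      ((Cf * ‖f‖ + ‖ud‖) * ((27 + K) / 6) * ‖f‖ + 1) * σ ^ 2 / a ^ 3 := by
    gcongr
    linarith
  calc |⟪v, w⟫| ≤ ‖v‖ * ‖w‖ := hcs
    _ ≤ _ := hbound
    _ = _ := heq
    _ ≤ _ := hfinal
end
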